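/- arXiv:2503.20367 — 6 statements merged into one kernel-verified Lean document; each statement's English description precedes it below -/
import Mathlib

section
/- Let p be a prime with p > 3, let s ≥ 1, and set n = 2p^s. Let S = {1, 3, p^s − 3, 2p^s − 1, 2p^s − 3, p^s + 3} ⊆ ℤ_n. Then the circulant graph Cay(ℤ_n, S) does not exhibit FR between any pair of distinct vertices. -/
open Matrix Filter

/-- Adjacency matrix of the Cayley graph `Cay(G,S)`: `A x y = 1` iff `x - y ∈ S`. -/
noncomputable def cayAdj {G : Type*} [AddCommGroup G] [Fintype G] [DecidableEq G]
    (S : Finset G) : Matrix G G ℂ :=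
  Matrix.of fun x y => if x - y ∈ S then 1 else 0

/-- Transition matrix `H(t) = exp(-i t A)` of the Cayley graph `Cay(G,S)`. -/
noncomputable def cayH {G : Type*} [AddCommGroup G] [Fintype G] [DecidableEq G]
    (S : Finset G) (t : ℝ) : Matrix G G ℂ :=
  NormedSpace.exp ((-(Complex.I * (t : ℂ))) • cayAdj S)

/-- `Cay(G,S)` exhibits pretty good fractional revival (PGFR) between `a` and `b`. -/
def ExhibitsPGFR {G : Type*} [AddCommGroup G] [Fintype G] [DecidableEq G]
    (S : Finset G) (a b : G) : Prop :=
  ∃ (α β : ℂ) (t : ℕ → ℝ), β ≠ 0 ∧ ‖α‖ ^ 2 + ‖β‖ ^ 2 = 1 ∧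
    Tendsto (fun k => (cayH S (t k)).mulVec ((Pi.single a 1 : G → ℂ))) atTop
      (nhds (α • (Pi.single a 1 : G → ℂ) + β • (Pi.single b 1 : G → ℂ)))

/-- `Cay(G,S)` exhibits fractional revival (FR) between `a` and `b`. -/
def ExhibitsFR {G : Type*} [AddCommGroup G] [Fintype G] [DecidableEq G]
    (S : Finset G) (a b : G) : Prop :=
  ∃ (t : ℝ), 0 < t ∧ ∃ α β : ℂ, β ≠ 0 ∧ ‖α‖ ^ 2 + ‖β‖ ^ 2 = 1 ∧
    (cayH S t).mulVec ((Pi.single a 1 : G → ℂ)) =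
      α • (Pi.single a 1 : G → ℂ) + β • (Pi.single b 1 : G → ℂ)

/-- `Cay(G,S)` exhibits pretty good state transfer (PGST) between `a` and `b`. -/
def ExhibitsPGST {G : Type*} [AddCommGroup G] [Fintype G] [DecidableEq G]
    (S : Finset G) (a b : G) : Prop :=
  ∃ (β : ℂ) (t : ℕ → ℝ), ‖β‖ = 1 ∧
    Tendsto (fun k => (cayH S (t k)).mulVec ((Pi.single a 1 : G → ℂ))) atTop
      (nhds (β • (Pi.single b 1 : G → ℂ)))

/-- The eigenvalue `λ_r = Σ_{y ∈ S} exp(2πi r y / n)` of the circulant graph `Cay(ℤ_n, S)`. -/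
noncomputable def circEig (n : ℕ) [NeZero n] (S : Finset (ZMod n)) (r : ℕ) : ℂ :=
  ∑ y ∈ S, Complex.exp (2 * Real.pi * Complex.I * r * y.val / n)

-- aux 1
lemma vecMul_matSmul {N : Type*} [Fintype N] (w : N → ℂ) (c : ℂ) (M : Matrix N N ℂ) :
    Matrix.vecMul w (c • M) = c • Matrix.vecMul w M := by
  ext j
  simp [Matrix.vecMul, dotProduct, Finset.mul_sum, Matrix.smul_apply]
  exact Finset.sum_congr rfl fun i _ => by ring

-- aux 2
lemma vecMul_exp_eig {N : Type*} [Fintype N] [DecidableEq N]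
    (B : Matrix N N ℂ) (w : N → ℂ) (ν : ℂ) (h : Matrix.vecMul w B = ν • w) :
    Matrix.vecMul w (NormedSpace.exp B) = NormedSpace.exp ν • w := by
  letI : SeminormedRing (Matrix N N ℂ) := Matrix.linftyOpSemiNormedRing
  letI : NormedRing (Matrix N N ℂ) := Matrix.linftyOpNormedRing
  letI : NormedAlgebra ℂ (Matrix N N ℂ) := Matrix.linftyOpNormedAlgebra
  have hpow : ∀ k : ℕ, Matrix.vecMul w (B ^ k) = ν ^ k • w := by
    intro k
    induction k with
    | zero => simp
    | succ k ih =>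
        rw [pow_succ, ← Matrix.vecMul_vecMul, ih, Matrix.smul_vecMul, h, smul_smul, pow_succ]
  let L : Matrix N N ℂ →ₗ[ℂ] (N → ℂ) :=
    { toFun := fun M => Matrix.vecMul w M
      map_add' := fun M M' => Matrix.vecMul_add M M' w
      map_smul' := fun c M => vecMul_matSmul w c M }
  have hsum : Summable (fun k : ℕ => ((Nat.factorial k : ℂ))⁻¹ • B ^ k) :=
    NormedSpace.expSeries_summable' B
  have key : Matrix.vecMul w (NormedSpace.exp B)
      = ∑' k : ℕ, Matrix.vecMul w (((Nat.factorial k : ℂ))⁻¹ • B ^ k) := by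
    have := (L.toContinuousLinearMap : Matrix N N ℂ →L[ℂ] (N → ℂ)).map_tsum hsum
    rw [NormedSpace.exp_eq_tsum (𝕂 := ℂ)]
    exact this
  rw [key]
  have h2 : ∀ k : ℕ, Matrix.vecMul w (((Nat.factorial k : ℂ))⁻¹ • B ^ k)
      = (((Nat.factorial k : ℂ))⁻¹ • ν ^ k) • w := by
    intro k
    rw [vecMul_matSmul, hpow, smul_smul]
    simp [smul_eq_mul]
  simp_rw [h2]
  rw [Summable.tsum_smul_const (NormedSpace.expSeries_summable' (𝕂 := ℂ) ν), NormedSpace.exp_eq_tsum (𝕂 := ℂ)]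

-- aux 3 : rational algebraic integer in (1,2) is impossible
lemma aux_final (x : ℝ) (h1 : 1 < x) (h2 : x < 2) (m1 m2 : ℤ) (hm2 : m2 ≠ 0)
    (hx : (m2 : ℝ) * x = (m1 : ℝ)) (hint : IsIntegral ℤ ((x : ℂ))) : False := by
  set q : ℚ := (m1 : ℚ) / (m2 : ℚ) with hqdef
  have hm2R : (m2 : ℝ) ≠ 0 := Int.cast_ne_zero.mpr hm2
  have hqx : (q : ℝ) = x := by
    rw [hqdef]
    push_cast
    field_simp
    linarith [hx]
  have halg : algebraMap ℚ ℂ q = ((x : ℝ) : ℂ) := by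
    rw [← hqx]
    simp [Complex.ofReal_ratCast]
  have hint2 : IsIntegral ℤ q := by
    rw [← isIntegral_algebraMap_iff (B := ℂ) (algebraMap ℚ ℂ).injective]
    rw [halg]
    exact hint
  obtain ⟨z, hz⟩ := IsIntegrallyClosed.isIntegral_iff.mp hint2
  have hzq : ((z : ℚ) : ℝ) = x := by rw [← hqx]; exact_mod_cast congrArg (fun r : ℚ => (r : ℝ)) hz
  have hz1 : (1 : ℝ) < (z : ℝ) := by push_cast at hzq ⊢; linarith
  have hz2 : ((z : ℝ)) < 2 := by push_cast at hzq ⊢; linarith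
  have : (1 : ℤ) < z := by exact_mod_cast hz1
  have : z < 2 := by exact_mod_cast hz2
  omega


set_option maxHeartbeats 1000000 in
theorem stmt_8 (p s n : ℕ) [NeZero n] (hp : p.Prime) (hp3 : 3 < p) (hs : 1 ≤ s)
    (hn : n = 2 * p ^ s) :
    ∀ a b : ZMod n, a ≠ b →
      ¬ ExhibitsFR
          ({((1 : ℕ) : ZMod n), ((3 : ℕ) : ZMod n), ((p ^ s - 3 : ℕ) : ZMod n),
            ((2 * p ^ s - 1 : ℕ) : ZMod n), ((2 * p ^ s - 3 : ℕ) : ZMod n),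
            ((p ^ s + 3 : ℕ) : ZMod n)} : Finset (ZMod n)) a b := by
  intro a b hab hFR
  obtain ⟨t, ht, α, β, hβ, -, heq⟩ := hFR
  set q : ℕ := p ^ s with hqdef
  -- numerics (q is kept abstract below)
  have hp5 : 5 ≤ p := by
    by_contra h
    have hp4 : p = 4 := by omega
    rw [hp4] at hp
    exact absurd hp (by norm_num)
  have hq5 : 5 ≤ q := le_trans hp5 (Nat.le_self_pow (by omega) p)
  have hqodd : q % 2 = 1 := by
    obtain ⟨k, hk⟩ : Odd q := (hp.odd_of_ne_two (by omega)).pow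
    omega
  have hn2q : n = 2 * q := hn
  clear_value q
  clear hn hqdef hs hp3 hp hp5
  have hn10 : 10 ≤ n := by omega
  have hn0 : n ≠ 0 := by omega
  -- the primitive root
  set ζ : ℂ := Complex.exp (2 * Real.pi * Complex.I / n) with hζdef
  have hprim : IsPrimitiveRoot ζ n := Complex.isPrimitiveRoot_exp n hn0
  have hζn : ζ ^ n = 1 := hprim.pow_eq_one
  have hζ0 : ζ ≠ 0 := by
    intro h
    rw [hζdef] at h
    exact Complex.exp_ne_zero _ h
  have hpowmod : ∀ m : ℕ, ζ ^ (m % n) = ζ ^ m := by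
    intro m
    conv_rhs => rw [← Nat.div_add_mod m n]
    rw [pow_add, pow_mul, hζn, one_pow, one_mul]
  -- the character
  set E : ZMod n → ℂ := fun z => ζ ^ z.val with hEdef
  have hE_nat : ∀ m : ℕ, E ((m : ZMod n)) = ζ ^ m := by
    intro m
    rw [hEdef]
    simp only [ZMod.val_natCast]
    exact hpowmod m
  have hE_add : ∀ z w : ZMod n, E (z + w) = E z * E w := by
    intro z w
    rw [hEdef]
    simp only
    rw [← pow_add, ZMod.val_add, hpowmod]
  have hE0 : E 0 = 1 := by rw [hEdef]; simp [ZMod.val_zero]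
  have hE_ne : ∀ z : ZMod n, E z ≠ 0 := fun z => pow_ne_zero _ hζ0
  have hE_neg : ∀ z : ZMod n, E (-z) = (E z)⁻¹ := by
    intro z
    refine eq_inv_of_mul_eq_one_left ?_
    rw [← hE_add, neg_add_cancel, hE0]
  -- the Finset S
  set SS : Finset (ZMod n) :=
    {((1 : ℕ) : ZMod n), ((3 : ℕ) : ZMod n), ((q - 3 : ℕ) : ZMod n),
      ((2 * q - 1 : ℕ) : ZMod n), ((2 * q - 3 : ℕ) : ZMod n),
      ((q + 3 : ℕ) : ZMod n)} with hSSdef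
  have hval : ∀ m : ℕ, m < n → (((m : ℕ) : ZMod n)).val = m := fun m hm => ZMod.val_cast_of_lt hm
  have hne : ∀ m m' : ℕ, m < n → m' < n → m ≠ m' → ((m : ZMod n) ≠ (m' : ZMod n)) := by
    intro m m' hm hm' hmm h
    exact hmm (by rw [← hval m hm, ← hval m' hm', h])
  have hsum_expand : ∀ f : ZMod n → ℂ,
      (∑ u ∈ SS, f u)
      = f ((1 : ℕ) : ZMod n) + f ((3 : ℕ) : ZMod n) + f ((q - 3 : ℕ) : ZMod n)
        + f ((2 * q - 1 : ℕ) : ZMod n) + f ((2 * q - 3 : ℕ) : ZMod n)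
        + f ((q + 3 : ℕ) : ZMod n) := by
    intro f
    have d1 : ((1 : ℕ) : ZMod n) ∉ ({((3 : ℕ) : ZMod n), ((q - 3 : ℕ) : ZMod n),
        ((2 * q - 1 : ℕ) : ZMod n), ((2 * q - 3 : ℕ) : ZMod n),
        ((q + 3 : ℕ) : ZMod n)} : Finset (ZMod n)) := by
      simp only [Finset.mem_insert, Finset.mem_singleton, not_or]
      exact ⟨hne 1 3 (by omega) (by omega) (by omega),
        hne 1 (q - 3) (by omega) (by omega) (by omega),
        hne 1 (2 * q - 1) (by omega) (by omega) (by omega),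
        hne 1 (2 * q - 3) (by omega) (by omega) (by omega),
        hne 1 (q + 3) (by omega) (by omega) (by omega)⟩
    have d2 : ((3 : ℕ) : ZMod n) ∉ ({((q - 3 : ℕ) : ZMod n),
        ((2 * q - 1 : ℕ) : ZMod n), ((2 * q - 3 : ℕ) : ZMod n),
        ((q + 3 : ℕ) : ZMod n)} : Finset (ZMod n)) := by
      simp only [Finset.mem_insert, Finset.mem_singleton, not_or]
      exact ⟨hne 3 (q - 3) (by omega) (by omega) (by omega),
        hne 3 (2 * q - 1) (by omega) (by omega) (by omega),
        hne 3 (2 * q - 3) (by omega) (by omega) (by omega),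
        hne 3 (q + 3) (by omega) (by omega) (by omega)⟩
    have d3 : ((q - 3 : ℕ) : ZMod n) ∉ ({((2 * q - 1 : ℕ) : ZMod n),
        ((2 * q - 3 : ℕ) : ZMod n), ((q + 3 : ℕ) : ZMod n)} : Finset (ZMod n)) := by
      simp only [Finset.mem_insert, Finset.mem_singleton, not_or]
      exact ⟨hne (q - 3) (2 * q - 1) (by omega) (by omega) (by omega),
        hne (q - 3) (2 * q - 3) (by omega) (by omega) (by omega),
        hne (q - 3) (q + 3) (by omega) (by omega) (by omega)⟩
    have d4 : ((2 * q - 1 : ℕ) : ZMod n) ∉ ({((2 * q - 3 : ℕ) : ZMod n),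
        ((q + 3 : ℕ) : ZMod n)} : Finset (ZMod n)) := by
      simp only [Finset.mem_insert, Finset.mem_singleton, not_or]
      exact ⟨hne (2 * q - 1) (2 * q - 3) (by omega) (by omega) (by omega),
        hne (2 * q - 1) (q + 3) (by omega) (by omega) (by omega)⟩
    have d5 : ((2 * q - 3 : ℕ) : ZMod n) ∉ ({((q + 3 : ℕ) : ZMod n)} : Finset (ZMod n)) := by
      simp only [Finset.mem_singleton]
      exact hne (2 * q - 3) (q + 3) (by omega) (by omega) (by omega)
    rw [hSSdef]
    rw [Finset.sum_insert d1, Finset.sum_insert d2, Finset.sum_insert d3, Finset.sum_insert d4,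
      Finset.sum_insert d5, Finset.sum_singleton]
    ring
  -- eigenvalues
  set μ : ZMod n → ℂ := fun z => ∑ u ∈ SS, E (z * u) with hμdef
  have hvec : ∀ z : ZMod n,
      Matrix.vecMul (fun x => E (z * x)) (cayAdj SS) = (μ z) • (fun x => E (z * x)) := by
    intro z
    ext y
    have hstep1 : Matrix.vecMul (fun x => E (z * x)) (cayAdj SS) y
        = ∑ x : ZMod n, if x - y ∈ SS then E (z * x) else 0 := by
      simp [Matrix.vecMul, dotProduct, cayAdj, Matrix.of_apply, mul_ite, mul_one, mul_zero]
    rw [hstep1, ← Finset.sum_filter]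
    have hflt : Finset.filter (fun x => x - y ∈ SS) Finset.univ = SS.image (fun u => u + y) := by
      ext x
      simp only [Finset.mem_filter, Finset.mem_univ, true_and, Finset.mem_image]
      constructor
      · intro h
        exact ⟨x - y, h, sub_add_cancel x y⟩
      · rintro ⟨u, hu, rfl⟩
        rwa [add_sub_cancel_right]
    rw [hflt, Finset.sum_image (fun u _ v _ h => by exact add_right_cancel h)]
    have : ∀ u : ZMod n, E (z * (u + y)) = E (z * u) * E (z * y) := by
      intro u
      rw [mul_add, hE_add]
    simp_rw [this]
    rw [← Finset.sum_mul]
    simp [hμdef, smul_eq_mul]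
  have hμexp : ∀ z : ZMod n, Matrix.vecMul (fun x => E (z * x)) (cayH SS t)
      = Complex.exp (-(Complex.I * t) * μ z) • (fun x => E (z * x)) := by
    intro z
    have h1 : Matrix.vecMul (fun x => E (z * x)) ((-(Complex.I * (t : ℂ))) • cayAdj SS)
        = ((-(Complex.I * (t : ℂ))) * μ z) • (fun x => E (z * x)) := by
      rw [vecMul_matSmul, hvec, smul_smul]
    have h2 := vecMul_exp_eig _ _ _ h1
    rw [Complex.exp_eq_exp_ℂ]
    exact h2
  have hkey : ∀ z : ZMod n, Complex.exp (-(Complex.I * t) * μ z)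
      = α + β * E (z * (b - a)) := by
    intro z
    have h0 := congrArg (fun v : ZMod n → ℂ => dotProduct (fun x => E (z * x)) v) heq
    simp only [dotProduct_mulVec] at h0
    rw [hμexp z] at h0
    rw [smul_dotProduct, dotProduct_add, dotProduct_smul,
      dotProduct_smul, dotProduct_single, dotProduct_single] at h0
    simp only [smul_eq_mul, mul_one] at h0
    have hEsub : E (z * (b - a)) = E (z * b) * (E (z * a))⁻¹ := by
      rw [mul_sub, sub_eq_add_neg, hE_add, hE_neg]
    rw [hEsub]
    have hEa := hE_ne (z * a)
    refine mul_right_cancel₀ hEa ?_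
    rw [h0]
    field_simp
  set c : ZMod n := b - a with hcdef
  have hc0 : c ≠ 0 := sub_ne_zero.mpr (Ne.symm hab)
  -- arithmetic identities in ZMod n
  have hqzz : (q : ZMod n) + (q : ZMod n) = 0 := by
    rw [← Nat.cast_add, (by omega : q + q = n), ZMod.natCast_self]
  have e1 : ((1 : ℕ) : ZMod n) = (1 : ZMod n) := by push_cast; ring
  have e3' : ((3 : ℕ) : ZMod n) = (3 : ZMod n) := by push_cast; ring
  have h2q0 : ((2 * q : ℕ) : ZMod n) = 0 := by rw [← hn2q, ZMod.natCast_self]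
  have eq3 : ((q - 3 : ℕ) : ZMod n) = (q : ZMod n) - 3 := by
    rw [Nat.cast_sub (by omega)]; push_cast; ring
  have e2q1 : ((2 * q - 1 : ℕ) : ZMod n) = -1 := by
    rw [Nat.cast_sub (by omega), h2q0]; push_cast; ring
  have e2q3 : ((2 * q - 3 : ℕ) : ZMod n) = -3 := by
    rw [Nat.cast_sub (by omega), h2q0]; push_cast; ring
  have eq3p : ((q + 3 : ℕ) : ZMod n) = (q : ZMod n) + 3 := by push_cast; ring
  -- symmetry of the eigenvalue: μ 1 = μ (-1)
  have hμsym : μ (1 : ZMod n) = μ (-1 : ZMod n) := by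
    rw [hμdef]
    simp only
    rw [hsum_expand (fun u => E ((1 : ZMod n) * u)), hsum_expand (fun u => E ((-1 : ZMod n) * u))]
    simp only [one_mul, neg_one_mul]
    rw [e1, e3', eq3, e2q1, e2q3, eq3p]
    have harg1 : -((q : ZMod n) - 3) = (q : ZMod n) + 3 := by linear_combination -hqzz
    have harg2 : -((q : ZMod n) + 3) = (q : ZMod n) - 3 := by linear_combination -hqzz
    rw [harg1, harg2, neg_neg, neg_neg]
    ring
  -- conclude c has order two, i.e. c = q
  have hEc : E c = E (-c) := by
    have h2 : α + β * E ((1 : ZMod n) * c) = α + β * E ((-1 : ZMod n) * c) := by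
      rw [← hkey 1, ← hkey (-1), hμsym]
    have h3 := mul_left_cancel₀ hβ (add_left_cancel h2)
    simpa [one_mul, neg_one_mul] using h3
  have hE2c : E (c + c) = 1 := by
    rw [hE_add]
    nth_rewrite 2 [hEc]
    rw [← hE_add, add_neg_cancel, hE0]
  have h2c0 : c + c = 0 := by
    have hv : ζ ^ ((c + c).val) = 1 := hE2c
    have hdvd := (hprim.pow_eq_one_iff_dvd _).mp hv
    have hlt := ZMod.val_lt (c + c)
    exact (ZMod.val_eq_zero _).mp (Nat.eq_zero_of_dvd_of_lt hdvd hlt)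
  have hcval : c.val = q := by
    have hcast : ((c.val + c.val : ℕ) : ZMod n) = 0 := by
      push_cast [ZMod.natCast_zmod_val]
      exact h2c0
    rw [ZMod.natCast_eq_zero_iff] at hcast
    have hlt := ZMod.val_lt c
    have hne0 : c.val ≠ 0 := fun h => hc0 ((ZMod.val_eq_zero c).mp h)
    obtain ⟨k, hk⟩ := hcast
    have hk2 : k < 2 := by
      by_contra hk2
      push_neg at hk2
      have : 2 * n ≤ n * k := by
        calc 2 * n = n * 2 := by ring
          _ ≤ n * k := Nat.mul_le_mul_left n hk2
      omega
    interval_cases k <;> omega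
  have hcq : c = (q : ZMod n) := by
    conv_lhs => rw [← ZMod.natCast_zmod_val c]
    rw [hcval]
  -- ζ ^ q = -1
  have hnC : (n : ℂ) ≠ 0 := Nat.cast_ne_zero.mpr hn0
  have hζq : ζ ^ q = -1 := by
    rw [hζdef, ← Complex.exp_nat_mul]
    have harg : (q : ℂ) * (2 * Real.pi * Complex.I / n) = Real.pi * Complex.I := by
      rw [hn2q]
      have : ((2 * q : ℕ) : ℂ) = 2 * (q : ℂ) := by push_cast; ring
      rw [this]
      have hqC : (q : ℂ) ≠ 0 := Nat.cast_ne_zero.mpr (by omega)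
      field_simp
    rw [harg, Complex.exp_pi_mul_I]
  have hmulq : ∀ m : ℕ, m % 2 = 1 → ((m : ZMod n)) * (q : ZMod n) = (q : ZMod n) := by
    intro m hm
    obtain ⟨j, hj⟩ : ∃ j, m = 2 * j + 1 := ⟨m / 2, by omega⟩
    have harith : m * q = j * n + q := by subst hj; rw [hn2q]; ring
    rw [← Nat.cast_mul, harith]
    push_cast [ZMod.natCast_self]
    ring
  have hEodd : ∀ m : ℕ, m % 2 = 1 → E ((m : ZMod n) * c) = -1 := by
    intro m hm
    rw [hcq, hmulq m hm, hE_nat, hζq]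
  have hαβ : ∀ m : ℕ, m % 2 = 1 →
      Complex.exp (-(Complex.I * t) * μ ((m : ZMod n))) = α - β := by
    intro m hm
    rw [hkey, hEodd m hm]
    ring
  -- eigenvalue for odd m
  have hμodd : ∀ m : ℕ, m % 2 = 1 → μ ((m : ZMod n)) = ζ ^ m + (ζ ^ m)⁻¹ := by
    intro m hm
    rw [hμdef]
    simp only
    rw [hsum_expand (fun u => E ((m : ZMod n) * u))]
    have hterm : ∀ k : ℕ, E ((m : ZMod n) * ((k : ℕ) : ZMod n)) = ζ ^ (m * k) := by
      intro k; rw [← Nat.cast_mul, hE_nat]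
    rw [hterm 1, hterm 3, hterm (q - 3), hterm (2 * q - 1), hterm (2 * q - 3), hterm (q + 3)]
    have hqm : ζ ^ (m * q) = -1 := by
      obtain ⟨j, hj⟩ : ∃ j, m = 2 * j + 1 := ⟨m / 2, by omega⟩
      have harith : m * q = n * j + q := by subst hj; rw [hn2q]; ring
      rw [harith, pow_add, pow_mul, hζn, one_pow, one_mul, hζq]
    have h1 : ζ ^ (m * (2 * q - 1)) * ζ ^ m = 1 := by
      rw [← pow_add]
      have e : m * (2 * q - 1) + m = n * m := by
        have e' : m * (2 * q - 1) + m = m * ((2 * q - 1) + 1) := by ring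
        rw [e', (by omega : (2 * q - 1) + 1 = 2 * q), ← hn2q]; ring
      rw [e, pow_mul, hζn, one_pow]
    have h3 : ζ ^ (m * (2 * q - 3)) * ζ ^ (m * 3) = 1 := by
      rw [← pow_add]
      have e : m * (2 * q - 3) + m * 3 = n * m := by
        have e' : m * (2 * q - 3) + m * 3 = m * ((2 * q - 3) + 3) := by ring
        rw [e', (by omega : (2 * q - 3) + 3 = 2 * q), ← hn2q]; ring
      rw [e, pow_mul, hζn, one_pow]
    have h4 : ζ ^ (m * (q - 3)) * ζ ^ (m * 3) = -1 := by
      rw [← pow_add]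
      have e : m * (q - 3) + m * 3 = m * q := by
        have e' : m * (q - 3) + m * 3 = m * ((q - 3) + 3) := by ring
        rw [e', (by omega : (q - 3) + 3 = q)]
      rw [e, hqm]
    have h5 : ζ ^ (m * (q + 3)) = -(ζ ^ (m * 3)) := by
      have e : m * (q + 3) = m * q + m * 3 := by ring
      rw [e, pow_add, hqm]; ring
    have hz1 : ζ ^ m ≠ 0 := pow_ne_zero _ hζ0
    have hz3 : ζ ^ (m * 3) ≠ 0 := pow_ne_zero _ hζ0
    have hY : ζ ^ (m * (2 * q - 1)) = (ζ ^ m)⁻¹ := eq_inv_of_mul_eq_one_left h1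
    have hZ : ζ ^ (m * (2 * q - 3)) = (ζ ^ (m * 3))⁻¹ := eq_inv_of_mul_eq_one_left h3
    have hX : ζ ^ (m * (q - 3)) = -1 / ζ ^ (m * 3) := eq_div_of_mul_eq hz3 h4
    rw [mul_one, hY, hZ, hX, h5]
    field_simp
    ring
  -- real eigenvalues
  set L : ℕ → ℝ := fun m => 2 * Real.cos (2 * Real.pi * m / n) with hLdef
  have hμreal : ∀ m : ℕ, m % 2 = 1 → μ ((m : ZMod n)) = ((L m : ℝ) : ℂ) := by
    intro m hm
    rw [hμodd m hm, hLdef]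
    have hargeq : (m : ℂ) * (2 * Real.pi * Complex.I / n)
        = ((2 * Real.pi * m / n : ℝ) : ℂ) * Complex.I := by
      push_cast
      field_simp
    have hexp : ζ ^ m = Complex.exp (((2 * Real.pi * m / n : ℝ) : ℂ) * Complex.I) := by
      rw [hζdef, ← Complex.exp_nat_mul, hargeq]
    have hneg : -(((2 * Real.pi * m / n : ℝ) : ℂ) * Complex.I)
        = ((-(2 * Real.pi * m / n) : ℝ) : ℂ) * Complex.I := by push_cast; ring
    rw [hexp, ← Complex.exp_neg, hneg, Complex.exp_mul_I, Complex.exp_mul_I]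
    rw [← Complex.ofReal_cos, ← Complex.ofReal_sin, ← Complex.ofReal_cos, ← Complex.ofReal_sin]
    rw [Real.cos_neg, Real.sin_neg]
    push_cast
    ring
  -- the time relations
  have hdiff : ∀ m : ℕ, m % 2 = 1 → ∃ k : ℤ, t * (L 1 - L m) = 2 * Real.pi * k := by
    intro m hm
    have hA : Complex.exp (-(Complex.I * t) * ((L m : ℝ) : ℂ))
        = Complex.exp (-(Complex.I * t) * ((L 1 : ℝ) : ℂ)) := by
      rw [← hμreal m hm, ← hμreal 1 (by norm_num)]
      rw [hαβ m hm, hαβ 1 (by norm_num)]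
    obtain ⟨k, hk⟩ := Complex.exp_eq_exp_iff_exists_int.mp hA
    refine ⟨k, ?_⟩
    have hC : ((t * (L 1 - L m) : ℝ) : ℂ) = ((2 * Real.pi * k : ℝ) : ℂ) := by
      push_cast
      linear_combination (-Complex.I) * hk +
        ((t : ℂ) * ((L 1 : ℝ) : ℂ) - (t : ℂ) * ((L m : ℝ) : ℂ)
          - 2 * ((Real.pi : ℝ) : ℂ) * ((k : ℤ) : ℂ)) * Complex.I_sq
    exact_mod_cast hC
  -- values of L
  have hqR : ((q : ℕ) : ℝ) ≠ 0 := Nat.cast_ne_zero.mpr (by omega)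
  have hnR : ((n : ℕ) : ℝ) = 2 * q := by rw [hn2q]; push_cast; ring
  set x : ℝ := 2 * Real.cos (Real.pi / q) with hxdef
  have hL1 : L 1 = x := by
    rw [hLdef, hxdef]
    simp only
    congr 2
    rw [hnR]
    push_cast
    field_simp
  have hLq : L q = -2 := by
    rw [hLdef]
    simp only
    rw [hnR, (by field_simp : 2 * Real.pi * (q : ℝ) / (2 * (q : ℝ)) = Real.pi), Real.cos_pi]
    norm_num
  have hLq2 : L (q - 2) = 2 - x ^ 2 := by
    rw [hLdef, hxdef]
    simp only
    have hcast : ((q - 2 : ℕ) : ℝ) = (q : ℝ) - 2 := by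
      rw [Nat.cast_sub (by omega)]; norm_num
    have hang : 2 * Real.pi * ((q - 2 : ℕ) : ℝ) / n = Real.pi - 2 * (Real.pi / q) := by
      rw [hcast, hnR]
      field_simp
    rw [hang, Real.cos_pi_sub, Real.cos_two_mul]
    ring
  -- bounds on x
  have hπ := Real.pi_pos
  have hq5R : (5 : ℝ) ≤ (q : ℝ) := by exact_mod_cast hq5
  have hcos_low : 1 / 2 < Real.cos (Real.pi / q) := by
    have h1 : Real.pi / q < Real.pi / 3 :=
      div_lt_div_of_pos_left hπ (by norm_num) (by linarith)
    have h2 := Real.cos_lt_cos_of_nonneg_of_le_pi (by positivity : (0:ℝ) ≤ Real.pi / q)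
      (by linarith : Real.pi / 3 ≤ Real.pi) h1
    rw [Real.cos_pi_div_three] at h2
    exact h2
  have hcos_hi : Real.cos (Real.pi / q) < 1 := by
    have hle : Real.pi / q ≤ Real.pi := div_le_self hπ.le (by exact_mod_cast (by omega : 1 ≤ q))
    have h2 := Real.cos_lt_cos_of_nonneg_of_le_pi (le_refl (0:ℝ)) hle (by positivity)
    simpa [Real.cos_zero] using h2
  have hx1 : 1 < x := by rw [hxdef]; linarith
  have hx2 : x < 2 := by rw [hxdef]; linarith
  obtain ⟨k2, hk2⟩ := hdiff q hqodd
  obtain ⟨k1, hk1⟩ := hdiff (q - 2) (by omega)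
  rw [hL1, hLq] at hk2
  rw [hL1, hLq2] at hk1
  have hk2pos : (0:ℝ) < 2 * Real.pi * k2 := by
    have h0 : (0:ℝ) < t * (x - -2) := mul_pos ht (by linarith)
    rw [hk2] at h0
    exact h0
  have hk2ne : k2 ≠ 0 := by
    intro h
    rw [h] at hk2pos
    norm_num at hk2pos
  have hrel : (k2 : ℝ) * x = ((k1 + k2 : ℤ) : ℝ) := by
    have hstep : 2 * Real.pi * (k1 : ℝ) = 2 * Real.pi * ((k2 : ℝ) * (x - 1)) := by
      calc 2 * Real.pi * (k1 : ℝ) = t * (x - (2 - x ^ 2)) := hk1.symm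
        _ = (t * (x - -2)) * (x - 1) := by ring
        _ = (2 * Real.pi * (k2 : ℝ)) * (x - 1) := by rw [hk2]
        _ = 2 * Real.pi * ((k2 : ℝ) * (x - 1)) := by ring
    have h2π : (2 * Real.pi) ≠ 0 := by positivity
    have h6 : (k1 : ℝ) = (k2 : ℝ) * (x - 1) := mul_left_cancel₀ h2π hstep
    push_cast
    linear_combination -h6
  have hζint : IsIntegral ℤ ζ := hprim.isIntegral (by omega)
  have hζinv : ζ⁻¹ = ζ ^ (n - 1) := by
    have hml : ζ ^ (n - 1) * ζ = 1 := by
      rw [← pow_succ, (by omega : n - 1 + 1 = n), hζn]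
    exact (eq_inv_of_mul_eq_one_left hml).symm
  have hxC : ((x : ℝ) : ℂ) = ζ + ζ⁻¹ := by
    have h1 := hμreal 1 (by norm_num)
    have h2 := hμodd 1 (by norm_num)
    rw [h1, hL1] at h2
    rw [h2, pow_one]
  have hxint : IsIntegral ℤ ((x : ℝ) : ℂ) := by
    rw [hxC, hζinv]
    exact hζint.add (hζint.pow _)
  exact aux_final x hx1 hx2 (k1 + k2) k2 hk2ne hrel hxint
end

section
/- Let n ≥ 2 be an integer. The complete graph K_n, realized as the Cayley graph Cay(ℤ_n, ℤ_n \ {0}), exhibits PGFR between some pair of distinct vertices if and only if n = 2. -/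
open Matrix Filter

lemma zmod2_sum {M : Type*} [AddCommMonoid M] (f : ZMod 2 → M) :
    ∑ z : ZMod 2, f z = f 0 + f 1 := by
  have h : (Finset.univ : Finset (ZMod 2)) = {0, 1} := by decide
  rw [h, Finset.sum_insert (by decide), Finset.sum_singleton]

lemma zmod2_cases (x : ZMod 2) : x = 0 ∨ x = 1 := by
  revert x; decide

lemma cayAdj_submatrix {n : ℕ} [NeZero n] (e : ZMod n ≃ ZMod n) :
    (cayAdj ((Finset.univ : Finset (ZMod n)) \ {0})).submatrix e e
      = cayAdj ((Finset.univ : Finset (ZMod n)) \ {0}) := by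
  ext x y
  simp only [cayAdj, Matrix.submatrix_apply, Matrix.of_apply, Finset.mem_sdiff,
    Finset.mem_univ, Finset.mem_singleton, true_and, sub_eq_zero, e.injective.eq_iff]

lemma cayH_submatrix {n : ℕ} [NeZero n] (t : ℝ) (e : ZMod n ≃ ZMod n) :
    (cayH ((Finset.univ : Finset (ZMod n)) \ {0}) t).submatrix e e
      = cayH ((Finset.univ : Finset (ZMod n)) \ {0}) t := by
  letI : SeminormedRing (Matrix (ZMod n) (ZMod n) ℂ) := Matrix.linftyOpSemiNormedRing
  letI : NormedRing (Matrix (ZMod n) (ZMod n) ℂ) := Matrix.linftyOpNormedRing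
  letI : NormedAlgebra ℂ (Matrix (ZMod n) (ZMod n) ℂ) := Matrix.linftyOpNormedAlgebra
  letI : NormedAlgebra ℚ (Matrix (ZMod n) (ZMod n) ℂ) := NormedAlgebra.restrictScalars ℚ ℂ _
  set φ := Matrix.reindexAlgEquiv ℂ ℂ e.symm with hφ
  have hcont : Continuous (φ : Matrix (ZMod n) (ZMod n) ℂ → Matrix (ZMod n) (ZMod n) ℂ) := by
    show Continuous fun M : Matrix (ZMod n) (ZMod n) ℂ => M.submatrix e e
    exact Continuous.matrix_submatrix continuous_id _ _
  have hmap := NormedSpace.map_exp (φ : Matrix (ZMod n) (ZMod n) ℂ ≃ₐ[ℂ] Matrix (ZMod n) (ZMod n) ℂ)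
    hcont ((-(Complex.I * (t : ℂ))) • cayAdj ((Finset.univ : Finset (ZMod n)) \ {0}))
  have hA : φ (cayAdj ((Finset.univ : Finset (ZMod n)) \ {0}))
      = cayAdj ((Finset.univ : Finset (ZMod n)) \ {0}) := cayAdj_submatrix e
  have hfix : φ ((-(Complex.I * (t : ℂ))) • cayAdj ((Finset.univ : Finset (ZMod n)) \ {0}))
      = (-(Complex.I * (t : ℂ))) • cayAdj ((Finset.univ : Finset (ZMod n)) \ {0}) := by
    rw [_root_.map_smul, hA]
  rw [hfix] at hmap
  exact hmap

lemma cayH_two_pi2 :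
    (cayH ((Finset.univ : Finset (ZMod 2)) \ {0}) (Real.pi / 2)).mulVec
        ((Pi.single 0 1 : ZMod 2 → ℂ))
      = (0 : ℂ) • (Pi.single 0 1 : ZMod 2 → ℂ)
        + (-Complex.I) • (Pi.single 1 1 : ZMod 2 → ℂ) := by
  set c : ℂ := -(Complex.I * ((Real.pi / 2 : ℝ) : ℂ)) with hc
  set U : Matrix (ZMod 2) (ZMod 2) ℂ :=
    Matrix.of fun x y => if x = 1 ∧ y = 1 then -1 else 1 with hU
  set V : Matrix (ZMod 2) (ZMod 2) ℂ := (2 : ℂ)⁻¹ • U with hV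
  set d : ZMod 2 → ℂ := fun z => if z = 0 then c else -c with hd
  have hUV : U * V = 1 := by
    ext x y
    rw [Matrix.mul_apply, zmod2_sum]
    rcases zmod2_cases x with rfl | rfl <;> rcases zmod2_cases y with rfl | rfl <;>
      simp [hU, hV, Matrix.one_apply] <;> norm_num
  have hUinv : U⁻¹ = V := Matrix.inv_eq_right_inv hUV
  have hUunit : IsUnit U :=
    (Matrix.isUnit_iff_isUnit_det U).mpr (Matrix.isUnit_det_of_right_inverse hUV)
  have hA : c • cayAdj ((Finset.univ : Finset (ZMod 2)) \ {0})
      = U * Matrix.diagonal d * U⁻¹ := by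
    rw [hUinv]
    ext x y
    rw [Matrix.mul_apply, zmod2_sum]
    simp only [Matrix.mul_apply]
    rw [zmod2_sum, zmod2_sum]
    rcases zmod2_cases x with rfl | rfl <;> rcases zmod2_cases y with rfl | rfl <;>
      simp [hU, hV, hd, cayAdj, Matrix.diagonal] <;> ring
  have hexp : cayH ((Finset.univ : Finset (ZMod 2)) \ {0}) (Real.pi / 2)
      = U * Matrix.diagonal (fun z => Complex.exp (d z)) * U⁻¹ := by
    have hpd : NormedSpace.exp d = fun z => Complex.exp (d z) := by
      rw [Pi.exp_def]
      funext z
      rw [Complex.exp_eq_exp_ℂ]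
    rw [cayH, ← hc, hA, Matrix.exp_conj U (Matrix.diagonal d) hUunit,
      Matrix.exp_diagonal, hpd]
  have hexpc : Complex.exp c = -Complex.I := by
    have : c = ((-(Real.pi / 2) : ℝ) : ℂ) * Complex.I := by
      rw [hc]; push_cast; ring
    rw [this, Complex.exp_mul_I, ← Complex.ofReal_cos, ← Complex.ofReal_sin]
    rw [Real.cos_neg, Real.sin_neg, Real.cos_pi_div_two, Real.sin_pi_div_two]
    simp
  have hexpnc : Complex.exp (-c) = Complex.I := by
    rw [Complex.exp_neg, hexpc, inv_neg, Complex.inv_I, neg_neg]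
  rw [hexp, hUinv]
  funext x
  rw [Matrix.mulVec_single_one]
  simp only [Matrix.col_apply, Matrix.mul_apply]
  rw [zmod2_sum]
  conv_lhs => rw [zmod2_sum, zmod2_sum]
  rcases zmod2_cases x with rfl | rfl <;>
    simp [hU, hV, hd, Matrix.diagonal, hexpc, hexpnc, Pi.single_apply] <;> ring


theorem stmt_9 (n : ℕ) [NeZero n] (hn : 2 ≤ n) :
    (∃ a b : ZMod n, a ≠ b ∧
        ExhibitsPGFR ((Finset.univ : Finset (ZMod n)) \ {0}) a b) ↔ n = 2 := by
  constructor
  · rintro ⟨a, b, hab, hPG⟩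
    obtain ⟨α, β, t, hβ, -, htend⟩ := hPG
    by_contra hne
    obtain ⟨c, hca, hcb⟩ : ∃ c : ZMod n, c ≠ a ∧ c ≠ b := by
      have hcpos : 0 < ({a, b}ᶜ : Finset (ZMod n)).card := by
        rw [Finset.card_compl, ZMod.card]
        have h2 := Finset.card_insert_le a ({b} : Finset (ZMod n))
        simp only [Finset.card_singleton] at h2
        omega
      obtain ⟨x, hx⟩ := Finset.card_pos.mp hcpos
      simp only [Finset.mem_compl, Finset.mem_insert, Finset.mem_singleton, not_or] at hx
      exact ⟨x, hx.1, hx.2⟩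
    have hkey : (fun k => (cayH ((Finset.univ : Finset (ZMod n)) \ {0}) (t k)).mulVec
          ((Pi.single a 1 : ZMod n → ℂ)) b)
        = fun k => (cayH ((Finset.univ : Finset (ZMod n)) \ {0}) (t k)).mulVec
          ((Pi.single a 1 : ZMod n → ℂ)) c := by
      funext k
      have hsub := cayH_submatrix (t k) (Equiv.swap b c)
      have hba : cayH ((Finset.univ : Finset (ZMod n)) \ {0}) (t k) b a
          = cayH ((Finset.univ : Finset (ZMod n)) \ {0}) (t k) c a := by
        conv_lhs => rw [← hsub]
        rw [Matrix.submatrix_apply, Equiv.swap_apply_left,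
          Equiv.swap_apply_of_ne_of_ne hab (Ne.symm hca)]
      simp only [Matrix.mulVec_single_one, Matrix.col_apply, mul_one]
      exact hba
    have hb := tendsto_pi_nhds.mp htend b
    have hcc := tendsto_pi_nhds.mp htend c
    rw [hkey] at hb
    have heq := tendsto_nhds_unique hb hcc
    simp only [Pi.add_apply, Pi.smul_apply, smul_eq_mul,
      Pi.single_eq_of_ne (Ne.symm hab), Pi.single_eq_same,
      Pi.single_eq_of_ne hca, Pi.single_eq_of_ne hcb,
      mul_zero, mul_one, zero_add, add_zero] at heq
    exact hβ heq
  · rintro rfl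
    refine ⟨0, 1, by decide, 0, -Complex.I, fun _ => Real.pi / 2, ?_, ?_, ?_⟩
    · simpa using Complex.I_ne_zero
    · simp
    · exact cayH_two_pi2 ▸ tendsto_const_nhds
end

section
/- Let p and q be distinct odd primes and let n be a positive integer divisible by 2pq. Let S be a symmetric subset of ℤ_n \ {0}. If the circulant graph Cay(ℤ_n, S) exhibits PGFR between some pair of distinct vertices, then there exists y ∈ S such that p divides the representative of y in {0,…,n−1} or q divides the representative of y in {0,…,n−1} (equivalently, y maps to 0 under the natural projection ℤ_n → ℤ_p or under ℤ_n → ℤ_q). -/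
open Matrix Filter

namespace PGFRaux

variable {n : ℕ} [NeZero n]

noncomputable def ψ : AddChar (ZMod n) ℂ := ZMod.stdAddChar

noncomputable def μ (S : Finset (ZMod n)) (r : ZMod n) : ℂ := ∑ s ∈ S, ψ (-(r * s))

lemma eigA (S : Finset (ZMod n)) (r : ZMod n) (f : ZMod n → ℂ) :
    ∑ x, ψ (-(r * x)) * (cayAdj S *ᵥ f) x = μ S r * ∑ x, ψ (-(r * x)) * f x := by
  have key : ∀ y : ZMod n, (∑ x, ψ (-(r*x)) * (if x - y ∈ S then (1:ℂ) else 0))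
      = μ S r * ψ (-(r*y)) := by
    intro y
    have h1 : ∑ x, ψ (-(r*(x+y))) * (if x ∈ S then (1:ℂ) else 0)
        = ∑ x, ψ (-(r*x)) * (if x - y ∈ S then (1:ℂ) else 0) :=
      Fintype.sum_equiv (Equiv.addRight y) _ _ (by
        intro x
        simp [Equiv.coe_addRight, add_sub_cancel_right])
    rw [← h1]
    have h2 : ∀ x : ZMod n, ψ (-(r*(x+y))) = ψ (-(r*x)) * ψ (-(r*y)) := by
      intro x
      rw [← AddChar.map_add_eq_mul]
      ring_nf
    simp_rw [h2, mul_ite, mul_one, mul_zero, Finset.sum_ite_mem, Finset.univ_inter, μ,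
      Finset.sum_mul]
  have expand : ∀ x : ZMod n, (cayAdj S *ᵥ f) x = ∑ y, (if x - y ∈ S then (1:ℂ) else 0) * f y := by
    intro x; rfl
  simp_rw [expand, Finset.mul_sum]
  rw [Finset.sum_comm]
  have step : ∀ y, (∑ x, ψ (-(r*x)) * ((if x - y ∈ S then (1:ℂ) else 0) * f y))
      = μ S r * (ψ (-(r*y)) * f y) := by
    intro y
    simp only [← mul_assoc, ← Finset.sum_mul, key y]
  simp only [step]

lemma eigB (S : Finset (ZMod n)) (r : ZMod n) (c : ℂ) (g : ZMod n → ℂ) :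
    ∑ x, ψ (-(r * x)) * ((c • cayAdj S) *ᵥ g) x
      = (c * μ S r) * ∑ x, ψ (-(r * x)) * g x := by
  rw [Matrix.smul_mulVec]
  simp only [Pi.smul_apply, smul_eq_mul]
  calc ∑ x, ψ (-(r * x)) * (c * (cayAdj S *ᵥ g) x)
      = c * ∑ x, ψ (-(r * x)) * (cayAdj S *ᵥ g) x := by
        rw [Finset.mul_sum]; exact Finset.sum_congr rfl fun x _ => mul_left_comm _ _ _
    _ = c * (μ S r * ∑ x, ψ (-(r * x)) * g x) := by rw [eigA]
    _ = (c * μ S r) * ∑ x, ψ (-(r * x)) * g x := (mul_assoc _ _ _).symm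

/-- The functional `M ↦ ∑ x, ψ(-(r x)) * (M *ᵥ f) x` as a continuous linear map. -/
noncomputable def T (r : ZMod n) (f : ZMod n → ℂ) :
    Matrix (ZMod n) (ZMod n) ℂ →L[ℂ] ℂ where
  toLinearMap :=
    { toFun := fun M => ∑ x, ψ (-(r * x)) * (M *ᵥ f) x
      map_add' := by
        intro M N
        simp [Matrix.add_mulVec, mul_add, Finset.sum_add_distrib]
      map_smul' := by
        intro c M
        simp only [Matrix.smul_mulVec, Pi.smul_apply, smul_eq_mul, RingHom.id_apply,
          Finset.mul_sum]
        exact Finset.sum_congr rfl fun x _ => mul_left_comm _ _ _ }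
  cont := by
    refine continuous_finset_sum _ fun x _ => continuous_const.mul ?_
    exact continuous_finset_sum _ fun y _ =>
      ((continuous_id.matrix_elem x y).mul continuous_const)

lemma eigExp (S : Finset (ZMod n)) (r : ZMod n) (f : ZMod n → ℂ) (c : ℂ) :
    ∑ x, ψ (-(r * x)) * ((NormedSpace.exp (c • cayAdj S)) *ᵥ f) x
      = Complex.exp (c * μ S r) * ∑ x, ψ (-(r * x)) * f x := by
  letI : NormedRing (Matrix (ZMod n) (ZMod n) ℂ) := Matrix.linftyOpNormedRing
  letI : NormedAlgebra ℂ (Matrix (ZMod n) (ZMod n) ℂ) := Matrix.linftyOpNormedAlgebra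
  have hpow : ∀ k : ℕ, ∑ x, ψ (-(r * x)) * (((c • cayAdj S) ^ k) *ᵥ f) x
      = (c * μ S r) ^ k * ∑ x, ψ (-(r * x)) * f x := by
    intro k
    induction k with
    | zero => simp [Matrix.one_mulVec]
    | succ k ih =>
        rw [pow_succ', ← Matrix.mulVec_mulVec, eigB, ih, pow_succ']
        ring
  have hsummable : Summable fun k : ℕ => ((Nat.factorial k : ℂ))⁻¹ • (c • cayAdj S) ^ k :=
    NormedSpace.expSeries_summable' (𝕂 := ℂ) (c • cayAdj S)
  have hT : (T r f) (NormedSpace.exp (c • cayAdj S))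
      = ∑' k : ℕ, (T r f) (((Nat.factorial k : ℂ))⁻¹ • (c • cayAdj S) ^ k) := by
    rw [NormedSpace.exp_eq_tsum ℂ]
    exact (T r f).map_tsum hsummable
  have hTval : ∀ M, (T r f) M = ∑ x, ψ (-(r * x)) * (M *ᵥ f) x := fun M => rfl
  rw [← hTval, hT]
  have : ∀ k : ℕ, (T r f) (((Nat.factorial k : ℂ))⁻¹ • (c • cayAdj S) ^ k)
      = ((Nat.factorial k : ℂ))⁻¹ • (c * μ S r) ^ k * ∑ x, ψ (-(r * x)) * f x := by
    intro k
    rw [_root_.map_smul, hTval, hpow]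
    simp [smul_eq_mul, mul_assoc]
  rw [tsum_congr this, tsum_mul_right]
  congr 1
  rw [Complex.exp_eq_exp_ℂ, NormedSpace.exp_eq_tsum ℂ]

lemma psi_mul_neg (x : ZMod n) : ψ x * ψ (-x) = 1 := by
  rw [← AddChar.map_add_eq_mul]; simp

lemma psi_abs (x : ZMod n) : ‖ψ x‖ = 1 := by
  rw [ψ, ZMod.stdAddChar_apply]; exact Circle.norm_coe _

lemma psi_ne (x : ZMod n) : ψ x ≠ 0 := by
  intro h
  have := psi_abs (n := n) x
  rw [h] at this; simp at this

lemma psi_one_iff (x : ZMod n) : ψ x = 1 ↔ x = 0 := by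
  constructor
  · intro h
    have h0 : ψ (0 : ZMod n) = 1 := AddChar.map_zero_eq_one _
    exact ZMod.injective_stdAddChar (h.trans h0.symm)
  · intro h; rw [h]; exact AddChar.map_zero_eq_one _

lemma psi_conj (x : ZMod n) : (starRingEnd ℂ) (ψ x) = ψ (-x) := by
  have h1 : (starRingEnd ℂ) (ψ x) * ψ x = 1 := by
    rw [mul_comm, Complex.mul_conj]
    norm_cast
    rw [Complex.normSq_eq_norm_sq, psi_abs]; norm_num
  have h2 : ψ (-x) * ψ x = 1 := by rw [mul_comm]; exact psi_mul_neg x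
  exact mul_right_cancel₀ (psi_ne x) (h1.trans h2.symm)

lemma psi_pow (j : ℕ) (x : ZMod n) : ψ x ^ j = ψ ((j : ZMod n) * x) := by
  rw [← nsmul_eq_mul, AddChar.map_nsmul_eq_pow]

lemma mu_im (S : Finset (ZMod n)) (hSsym : ∀ y ∈ S, -y ∈ S) (r : ZMod n) :
    (μ S r).im = 0 := by
  have hconj : (starRingEnd ℂ) (μ S r) = μ S r := by
    rw [μ, map_sum]
    simp_rw [psi_conj, neg_neg]
    refine Finset.sum_nbij' (fun s => -s) (fun s => -s) ?_ ?_ ?_ ?_ ?_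
    · intro a ha; exact hSsym a ha
    · intro a ha; exact hSsym a ha
    · intro a _; simp
    · intro a _; simp
    · intro a _; rw [mul_neg, neg_neg]
  exact Complex.conj_eq_iff_im.mp hconj

lemma abs_exp_mu (S : Finset (ZMod n)) (hSsym : ∀ y ∈ S, -y ∈ S) (r : ZMod n) (t : ℝ) :
    ‖Complex.exp (-(Complex.I * (t : ℂ)) * μ S r)‖ = 1 := by
  rw [Complex.norm_exp]
  have him := mu_im S hSsym r
  have : (-(Complex.I * (t : ℂ)) * μ S r).re = 0 := by
    simp [Complex.mul_re, Complex.mul_im, him]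
  rw [this, Real.exp_zero]

lemma sum_psi_single (r v : ZMod n) :
    ∑ x, ψ (-(r * x)) * (Pi.single v 1 : ZMod n → ℂ) x = ψ (-(r * v)) := by
  have : ∀ x : ZMod n, ψ (-(r * x)) * (Pi.single v 1 : ZMod n → ℂ) x
      = if x = v then ψ (-(r * v)) else 0 := by
    intro x
    by_cases hx : x = v
    · subst hx; simp
    · simp [Pi.single_apply, hx]
  simp_rw [this]
  simp

lemma tend_exp (S : Finset (ZMod n)) (a b : ZMod n) (α β : ℂ) (t : ℕ → ℝ)
    (htend : Tendsto (fun k => (cayH S (t k)).mulVec ((Pi.single a 1 : ZMod n → ℂ))) atTop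
      (nhds (α • (Pi.single a 1 : ZMod n → ℂ) + β • (Pi.single b 1 : ZMod n → ℂ))))
    (r : ZMod n) :
    Tendsto (fun k => Complex.exp (-(Complex.I * (t k : ℂ)) * μ S r)) atTop
      (nhds (α + β * ψ (r * (a - b)))) := by
  have hcont : Continuous (fun g : ZMod n → ℂ => ∑ x, ψ (-(r * x)) * g x) :=
    continuous_finset_sum _ fun x _ => continuous_const.mul (continuous_apply x)
  have h1 := (hcont.tendsto _).comp htend
  have hval : ∀ k, (fun g : ZMod n → ℂ => ∑ x, ψ (-(r * x)) * g x)
      ((cayH S (t k)).mulVec ((Pi.single a 1 : ZMod n → ℂ)))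
      = Complex.exp (-(Complex.I * (t k : ℂ)) * μ S r) * ψ (-(r * a)) := by
    intro k
    show ∑ x, ψ (-(r * x)) * ((NormedSpace.exp ((-(Complex.I * (t k : ℂ))) • cayAdj S)) *ᵥ
      (Pi.single a 1 : ZMod n → ℂ)) x = _
    rw [eigExp, sum_psi_single]
  have hlim : (fun g : ZMod n → ℂ => ∑ x, ψ (-(r * x)) * g x)
      (α • (Pi.single a 1 : ZMod n → ℂ) + β • (Pi.single b 1 : ZMod n → ℂ))
      = α * ψ (-(r * a)) + β * ψ (-(r * b)) := by
    simp only [Pi.add_apply, Pi.smul_apply, smul_eq_mul, mul_add, Finset.sum_add_distrib]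
    congr 1
    · rw [← sum_psi_single r a, Finset.mul_sum]; exact Finset.sum_congr rfl fun x _ => by ring
    · rw [← sum_psi_single r b, Finset.mul_sum]; exact Finset.sum_congr rfl fun x _ => by ring
  rw [Function.comp_def] at h1
  simp only [hval, hlim] at h1
  have h2 := h1.mul_const (ψ (r * a))
  have heq : ∀ k, Complex.exp (-(Complex.I * (t k : ℂ)) * μ S r) * ψ (-(r * a)) * ψ (r * a)
      = Complex.exp (-(Complex.I * (t k : ℂ)) * μ S r) := by
    intro k
    rw [mul_assoc, mul_comm (ψ (-(r * a))), psi_mul_neg, mul_one]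
  simp only [heq] at h2
  have hlim2 : (α * ψ (-(r * a)) + β * ψ (-(r * b))) * ψ (r * a)
      = α + β * ψ (r * (a - b)) := by
    rw [add_mul, mul_assoc, mul_comm (ψ (-(r * a))), psi_mul_neg, mul_one, mul_assoc,
      ← AddChar.map_add_eq_mul]
    congr 2
    ring
  rwa [hlim2] at h2

lemma psi_normSq (x : ZMod n) : Complex.normSq (ψ x) = 1 := by
  rw [← Complex.sq_norm, psi_abs]; norm_num

lemma musum (S : Finset (ZMod n)) (m : ℕ) (hm : 0 < m) (hmn : m ∣ n)
    (hS : ∀ s ∈ S, ¬ m ∣ s.val) (r : ZMod n) :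
    ∑ j ∈ Finset.range m, μ S (r + (j : ZMod n) * ((n / m : ℕ) : ZMod n)) = 0 := by
  have hn0 : 0 < n := Nat.pos_of_ne_zero (NeZero.ne n)
  simp only [μ]
  rw [Finset.sum_comm]
  refine Finset.sum_eq_zero fun s hs => ?_
  set g : ZMod n := ((n / m : ℕ) : ZMod n) with hg
  have hterm : ∀ j ∈ Finset.range m,
      ψ (-((r + (j : ZMod n) * g) * s)) = ψ (-(r * s)) * ψ (-(g * s)) ^ j := by
    intro j _
    rw [psi_pow, ← AddChar.map_add_eq_mul]
    congr 1
    ring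
  rw [Finset.sum_congr rfl hterm, ← Finset.mul_sum]
  have hω1 : ψ (-(g * s)) ≠ 1 := by
    intro h1
    have h2 : -(g * s) = 0 := (psi_one_iff _).mp h1
    have h3 : g * s = 0 := neg_eq_zero.mp h2
    have h4 : g * s = (((n / m) * s.val : ℕ) : ZMod n) := by
      rw [hg, Nat.cast_mul, ZMod.natCast_zmod_val]
    rw [h4, ZMod.natCast_eq_zero_iff] at h3
    have h5 : n / m * m ∣ n / m * s.val := by
      rwa [Nat.div_mul_cancel hmn]
    have h6 : 0 < n / m := Nat.div_pos (Nat.le_of_dvd hn0 hmn) hm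
    exact hS s hs ((Nat.mul_dvd_mul_iff_left h6).mp h5)
  have hωp : ψ (-(g * s)) ^ m = 1 := by
    rw [psi_pow]
    have : ((m : ZMod n)) * -(g * s) = -(((m * (n / m) : ℕ) : ZMod n) * s) := by
      push_cast
      ring
    rw [this, Nat.mul_div_cancel' hmn, ZMod.natCast_self]
    simp
  rw [geom_sum_eq hω1, hωp]
  simp

end PGFRaux

theorem stmt_10 (p q n : ℕ) [NeZero n] (hp : p.Prime) (hq : q.Prime)
    (hpodd : Odd p) (hqodd : Odd q) (hpq : p ≠ q) (hn : 2 * p * q ∣ n)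
    (S : Finset (ZMod n)) (hS0 : (0 : ZMod n) ∉ S) (hSsym : ∀ y ∈ S, -y ∈ S)
    (h : ∃ a b : ZMod n, a ≠ b ∧ ExhibitsPGFR S a b) :
    ∃ y ∈ S, p ∣ y.val ∨ q ∣ y.val := by
  classical
  by_contra hcon
  push_neg at hcon
  obtain ⟨a, b, hab, α, β, t, hβ, hαβ, htend⟩ := h
  have hd : a - b ≠ 0 := sub_ne_zero.mpr hab
  set d : ZMod n := a - b with hd_def
  have hpn : p ∣ n := dvd_trans ⟨2 * q, by ring⟩ hn
  have hqn : q ∣ n := dvd_trans ⟨2 * p, by ring⟩ hn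
  have h2pn : 2 * p ∣ n := dvd_trans ⟨q, by ring⟩ hn
  have h2qn : 2 * q ∣ n := dvd_trans ⟨p, by ring⟩ hn
  set c : ZMod n → ℂ := fun r => α + β * PGFRaux.ψ (r * d) with hc_def
  have hC : ∀ r : ZMod n,
      Tendsto (fun k => Complex.exp (-(Complex.I * (t k : ℂ)) * PGFRaux.μ S r)) atTop
        (nhds (c r)) := fun r => PGFRaux.tend_exp S a b α β t htend r
  have habs : ∀ r : ZMod n, ‖c r‖ = 1 := by
    intro r
    have h1 := (continuous_norm.tendsto _).comp (hC r)
    rw [Function.comp_def] at h1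
    have h2 : (fun k => ‖Complex.exp (-(Complex.I * (t k : ℂ)) * PGFRaux.μ S r)‖)
        = fun _ => 1 := funext fun k => PGFRaux.abs_exp_mu S hSsym r (t k)
    rw [h2] at h1
    exact tendsto_nhds_unique h1 tendsto_const_nhds
  have hcne : ∀ r : ZMod n, c r ≠ 0 := by
    intro r h0
    have := habs r
    rw [h0] at this
    simp at this
  have hprodgen : ∀ (m : ℕ), 0 < m → m ∣ n → (∀ s ∈ S, ¬ m ∣ s.val) →
      ∀ r : ZMod n,
        ∏ j ∈ Finset.range m, c (r + (j : ZMod n) * ((n / m : ℕ) : ZMod n)) = 1 := by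
    intro m hm hmn hmS r
    have hsum := PGFRaux.musum S m hm hmn hmS r
    have hconst : ∀ k, ∏ j ∈ Finset.range m,
        Complex.exp (-(Complex.I * (t k : ℂ)) *
          PGFRaux.μ S (r + (j : ZMod n) * ((n / m : ℕ) : ZMod n))) = 1 := by
      intro k
      rw [← Complex.exp_sum, ← Finset.mul_sum, hsum, mul_zero, Complex.exp_zero]
    have h1 : Tendsto (fun k => ∏ j ∈ Finset.range m,
        Complex.exp (-(Complex.I * (t k : ℂ)) *
          PGFRaux.μ S (r + (j : ZMod n) * ((n / m : ℕ) : ZMod n)))) atTop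
        (nhds (∏ j ∈ Finset.range m, c (r + (j : ZMod n) * ((n / m : ℕ) : ZMod n)))) :=
      tendsto_finset_prod _ fun j _ => hC _
    simp only [hconst] at h1
    exact tendsto_nhds_unique h1 tendsto_const_nhds
  have hSp : ∀ s ∈ S, ¬ p ∣ s.val := fun s hs => (hcon s hs).1
  have hSq : ∀ s ∈ S, ¬ q ∣ s.val := fun s hs => (hcon s hs).2
  have hprodp := hprodgen p hp.pos hpn hSp
  have hprodq := hprodgen q hq.pos hqn hSq
  have hcop : IsCoprime (p : ℤ) (q : ℤ) := by
    rw [Int.isCoprime_iff_gcd_eq_one, Int.gcd_natCast_natCast]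
    exact (Nat.coprime_primes hp hq).mpr hpq
  obtain ⟨u, v, huv⟩ := hcop
  by_cases hα : α = 0
  · -- ratio trick
    have hshift : ∀ x : ZMod n, c (x + 1) = c x * PGFRaux.ψ d := by
      intro x
      simp only [hc_def, hα, zero_add]
      rw [mul_assoc, ← AddChar.map_add_eq_mul]
      congr 2
      ring
    have hkey : ∀ (m : ℕ),
        (∀ r : ZMod n,
          ∏ j ∈ Finset.range m, c (r + (j : ZMod n) * ((n / m : ℕ) : ZMod n)) = 1) →
        (m : ZMod n) * d = 0 := by
      intro m hprod
      have h0 := hprod 0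
      have h1 := hprod 1
      have h2 : ∀ j ∈ Finset.range m,
          c ((1 : ZMod n) + (j : ZMod n) * ((n / m : ℕ) : ZMod n))
            = c ((0 : ZMod n) + (j : ZMod n) * ((n / m : ℕ) : ZMod n)) * PGFRaux.ψ d := by
        intro j _
        rw [show (1 : ZMod n) + (j : ZMod n) * ((n / m : ℕ) : ZMod n)
          = ((0 : ZMod n) + (j : ZMod n) * ((n / m : ℕ) : ZMod n)) + 1 by ring, hshift]
      rw [Finset.prod_congr rfl h2, Finset.prod_mul_distrib, h0, Finset.prod_const,
        Finset.card_range, one_mul] at h1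
      rw [PGFRaux.psi_pow] at h1
      exact (PGFRaux.psi_one_iff _).mp h1
    have hpd := hkey p hprodp
    have hqd := hkey q hprodq
    apply hd
    have hcast : ((u * p + v * q : ℤ) : ZMod n) = 1 := by rw [huv]; exact Int.cast_one
    calc d = ((u * p + v * q : ℤ) : ZMod n) * d := by rw [hcast, one_mul]
      _ = (u : ZMod n) * ((p : ZMod n) * d) + (v : ZMod n) * ((q : ZMod n) * d) := by
          push_cast
          ring
      _ = 0 := by rw [hpd, hqd]; ring
  · -- α ≠ 0
    have hRe : ∀ r : ZMod n, (α * (starRingEnd ℂ) β * PGFRaux.ψ (r * d)).re = 0 := by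
      intro r
      have h2 : Complex.normSq (c (-r)) = 1 := by
        rw [← Complex.sq_norm, habs]
        norm_num
      have hcval : c (-r) = α + β * PGFRaux.ψ ((-r) * d) := rfl
      rw [hcval, Complex.normSq_add] at h2
      have h3 : Complex.normSq (β * PGFRaux.ψ ((-r) * d)) = Complex.normSq β := by
        rw [Complex.normSq_mul, PGFRaux.psi_normSq, mul_one]
      have h4 : Complex.normSq α + Complex.normSq β = 1 := by
        rw [← Complex.sq_norm, ← Complex.sq_norm]
        exact hαβ
      have h5 : (starRingEnd ℂ) (β * PGFRaux.ψ ((-r) * d))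
          = (starRingEnd ℂ) β * PGFRaux.ψ (r * d) := by
        rw [_root_.map_mul, PGFRaux.psi_conj]
        congr 2
        ring
      rw [h3, h5] at h2
      have h6 : (α * ((starRingEnd ℂ) β * PGFRaux.ψ (r * d))).re
          = (α * (starRingEnd ℂ) β * PGFRaux.ψ (r * d)).re := by rw [mul_assoc]
      rw [h6] at h2
      linarith
    set w : ℂ := α * (starRingEnd ℂ) β with hw_def
    have hw : w ≠ 0 := mul_ne_zero hα (by simpa using hβ)
    have hwre : w.re = 0 := by
      have := hRe 0
      rw [zero_mul, AddChar.map_zero_eq_one, mul_one] at this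
      exact this
    have hwim : w.im ≠ 0 := by
      intro h0
      exact hw (Complex.ext hwre h0)
    have him : ∀ r : ZMod n, (PGFRaux.ψ (r * d)).im = 0 := by
      intro r
      have h1 := hRe r
      rw [Complex.mul_re, hwre, zero_mul, zero_sub, neg_eq_zero] at h1
      exact (mul_eq_zero.mp h1).resolve_left hwim
    have hsq : ∀ r : ZMod n, PGFRaux.ψ (r * d) ^ 2 = 1 := by
      intro r
      set z : ℂ := PGFRaux.ψ (r * d) with hz_def
      have h1 : Complex.normSq z = 1 := PGFRaux.psi_normSq _
      have h2 : z.im = 0 := him r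
      have hz : z = ((z.re : ℝ) : ℂ) := Complex.ext rfl (by simp [h2])
      calc z ^ 2 = ((z.re : ℝ) : ℂ) ^ 2 := by rw [← hz]
        _ = (((z.re ^ 2 : ℝ)) : ℂ) := by push_cast; ring
        _ = ((Complex.normSq z : ℝ) : ℂ) := by
            rw [Complex.normSq_apply, h2]
            push_cast
            ring
        _ = 1 := by rw [h1]; norm_num
    have h2d : (2 : ZMod n) * d = 0 := by
      have h1 := hsq 1
      rw [one_mul, PGFRaux.psi_pow 2 d] at h1
      have h2 := (PGFRaux.psi_one_iff _).mp h1
      rwa [Nat.cast_ofNat] at h2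
    have hψd : PGFRaux.ψ d = -1 := by
      have hsq1 : PGFRaux.ψ d ^ 2 = 1 := by
        have := hsq 1
        rwa [one_mul] at this
      have hne1 : PGFRaux.ψ d ≠ 1 := fun h1 => hd ((PGFRaux.psi_one_iff d).mp h1)
      have hfac : (PGFRaux.ψ d - 1) * (PGFRaux.ψ d + 1) = 0 := by linear_combination hsq1
      rcases mul_eq_zero.mp hfac with h1 | h1
      · exact absurd (sub_eq_zero.mp h1) hne1
      · linear_combination h1
    have hgd : ∀ m : ℕ, 2 * m ∣ n → m ≠ 0 → ((n / m : ℕ) : ZMod n) * d = 0 := by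
      intro m hm hm0
      obtain ⟨k, hk⟩ := hm
      have hnm : n / m = 2 * k := by
        rw [hk, show 2 * m * k = m * (2 * k) by ring,
          Nat.mul_div_cancel_left _ (Nat.pos_of_ne_zero hm0)]
      rw [hnm]
      push_cast
      calc (2 * (k : ZMod n)) * d = (k : ZMod n) * ((2 : ZMod n) * d) := by ring
        _ = 0 := by rw [h2d, mul_zero]
    have hcr : ∀ (m : ℕ), 2 * m ∣ n → m ≠ 0 → ∀ (r : ZMod n) (j : ℕ),
        c (r + (j : ZMod n) * ((n / m : ℕ) : ZMod n)) = c r := by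
      intro m hm hm0 r j
      have h0 := hgd m hm hm0
      have heq : (r + (j : ZMod n) * ((n / m : ℕ) : ZMod n)) * d = r * d := by
        calc (r + (j : ZMod n) * ((n / m : ℕ) : ZMod n)) * d
            = r * d + (j : ZMod n) * (((n / m : ℕ) : ZMod n) * d) := by ring
          _ = r * d := by rw [h0, mul_zero, add_zero]
      simp only [hc_def]
      rw [heq]
    have hmp : 2 * p ∣ n := h2pn
    have hcpow : ∀ r : ZMod n, c r ^ p = 1 ∧ c r ^ q = 1 := by
      intro r
      constructor
      · have h1 := hprodp r
        rw [Finset.prod_congr rfl (fun j _ => hcr p h2pn hp.pos.ne' r j),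
          Finset.prod_const, Finset.card_range] at h1
        exact h1
      · have h1 := hprodq r
        rw [Finset.prod_congr rfl (fun j _ => hcr q h2qn hq.pos.ne' r j),
          Finset.prod_const, Finset.card_range] at h1
        exact h1
    have hc1 : ∀ r : ZMod n, c r = 1 := by
      intro r
      have hz := hcne r
      have hzp : c r ^ (p : ℤ) = 1 := by
        rw [zpow_natCast]
        exact (hcpow r).1
      have hzq : c r ^ (q : ℤ) = 1 := by
        rw [zpow_natCast]
        exact (hcpow r).2
      calc c r = c r ^ (1 : ℤ) := (zpow_one _).symm
        _ = c r ^ (u * (p : ℤ) + v * (q : ℤ)) := by rw [huv]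
        _ = (c r ^ ((p : ℤ) * u)) * (c r ^ ((q : ℤ) * v)) := by
            rw [← zpow_add₀ hz]
            congr 1
            ring
        _ = 1 := by rw [_root_.zpow_mul, _root_.zpow_mul, hzp, hzq, _root_.one_zpow, _root_.one_zpow, one_mul]
    have e0 : α + β = 1 := by
      have h1 := hc1 0
      simp only [hc_def] at h1
      rw [zero_mul, AddChar.map_zero_eq_one, mul_one] at h1
      exact h1
    have e1 : α - β = 1 := by
      have h1 := hc1 1
      simp only [hc_def] at h1
      rw [one_mul, hψd] at h1
      linear_combination h1
    apply hβ
    linear_combination (e0 - e1) / 2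
end

section
/- Let p and q be distinct odd primes and let n be a positive integer divisible by 2pq. Let S be a symmetric subset of ℤ_n \ {0}. If the complement of the circulant graph Cay(ℤ_n, S), namely Cay(ℤ_n, ℤ_n \ (S ∪ {0})), exhibits PGFR between some pair of distinct vertices, then there exists y ∈ S such that p divides the representative of y in {0,…,n−1} or q divides the representative of y in {0,…,n−1} (equivalently, y maps to 0 under the natural projection ℤ_n → ℤ_p or under ℤ_n → ℤ_q). -/
open Matrix Filter

lemma exp_mulVec_eigen {m : Type*} [Fintype m] [DecidableEq m] (M : Matrix m m ℂ)
    (v : m → ℂ) (μ : ℂ) (hv : M.mulVec v = μ • v) :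
    (NormedSpace.exp M).mulVec v = Complex.exp μ • v := by
  letI : SeminormedRing (Matrix m m ℂ) := Matrix.linftyOpSemiNormedRing
  letI : NormedRing (Matrix m m ℂ) := Matrix.linftyOpNormedRing
  letI : NormedAlgebra ℂ (Matrix m m ℂ) := Matrix.linftyOpNormedAlgebra
  have hs : HasSum (fun k : ℕ => ((k.factorial : ℂ)⁻¹) • M ^ k) (NormedSpace.exp M) :=
    NormedSpace.exp_series_hasSum_exp' M
  let L : Matrix m m ℂ →ₗ[ℂ] (m → ℂ) :=
    { toFun := fun N => N.mulVec v
      map_add' := fun A B => Matrix.add_mulVec A B v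
      map_smul' := fun c A => (Matrix.smul_mulVec c A v) }
  have hL : Continuous L := LinearMap.continuous_of_finiteDimensional L
  have hs2 := hs.map L.toAddMonoidHom hL
  have hpow : ∀ k : ℕ, (M ^ k).mulVec v = (μ ^ k) • v := by
    intro k
    induction k with
    | zero => simp [Matrix.one_mulVec]
    | succ k ih =>
      rw [pow_succ, ← Matrix.mulVec_mulVec, hv, Matrix.mulVec_smul, ih, smul_smul, pow_succ,
        mul_comm]
  have hs3 : HasSum (fun k : ℕ => ((k.factorial : ℂ)⁻¹ * μ ^ k) • v)
      ((NormedSpace.exp M).mulVec v) := by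
    convert hs2 using 2 with k
    simp only [L, Function.comp, LinearMap.toAddMonoidHom_coe, LinearMap.coe_mk, AddHom.coe_mk]
    rw [Matrix.smul_mulVec, hpow, smul_smul]
    rfl
  have hs4 : HasSum (fun k : ℕ => ((k.factorial : ℂ)⁻¹ * μ ^ k) • v)
      (Complex.exp μ • v) := by
    have h5 : HasSum (fun k : ℕ => ((k.factorial : ℂ)⁻¹) • μ ^ k) (NormedSpace.exp μ) :=
      NormedSpace.exp_series_hasSum_exp' μ
    rw [← Complex.exp_eq_exp_ℂ] at h5
    simpa only [smul_eq_mul] using h5.smul_const v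
  exact hs3.unique hs4

section CayleyHelpers

variable {n : ℕ} [NeZero n]

local notation "ψ" => (ZMod.stdAddChar (N := n))

lemma psi_abs (x : ZMod n) : ‖ψ x‖ = 1 := by
  rw [ZMod.stdAddChar_apply]; exact Circle.norm_coe _

lemma psi_ne_zero (x : ZMod n) : ψ x ≠ 0 := by
  intro h; have := psi_abs x; rw [h] at this; simp at this

lemma psi_eq_one_iff {x : ZMod n} : ψ x = 1 ↔ x = 0 := by
  constructor
  · intro h
    have h0 : ψ x = ψ 0 := by rw [h, AddChar.map_zero_eq_one]
    exact ZMod.injective_stdAddChar h0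
  · rintro rfl; exact AddChar.map_zero_eq_one _

lemma psi_conj (x : ZMod n) : (starRingEnd ℂ) (ψ x) = ψ (-x) := by
  have h1 : ψ x * ψ (-x) = 1 := by
    rw [← AddChar.map_add_eq_mul, add_neg_cancel, AddChar.map_zero_eq_one]
  have h2 : ψ x * (starRingEnd ℂ) (ψ x) = 1 := by
    rw [Complex.mul_conj, ← Complex.sq_norm, psi_abs]; norm_num
  have := h1.trans h2.symm
  exact (mul_left_cancel₀ (psi_ne_zero x) this).symm

lemma psi_ortho (b : ZMod n) : ∑ x : ZMod n, ψ (b * x) = if b = 0 then (n : ℂ) else 0 := by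
  have := AddChar.sum_mulShift b (ZMod.isPrimitive_stdAddChar n)
  simp_rw [mul_comm] at this
  rw [ZMod.card] at this
  rw [this]
  split_ifs <;> simp

lemma cayAdj_mulVec_char (T : Finset (ZMod n)) (r : ZMod n) :
    (cayAdj T).mulVec (fun x => ψ (r * x)) =
      (∑ z ∈ T, ψ (-(r * z))) • fun x => ψ (r * x) := by
  funext x
  simp only [cayAdj, Matrix.mulVec, dotProduct, Matrix.of_apply, ite_mul, one_mul,
    zero_mul, Pi.smul_apply, smul_eq_mul]
  rw [Fintype.sum_equiv (Equiv.subLeft x) _ (fun z => if z ∈ T then ψ (r * (x - z)) else 0)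
    (by intro z; simp [Equiv.subLeft])]
  rw [Finset.sum_ite_mem, Finset.univ_inter, Finset.sum_mul]
  refine Finset.sum_congr rfl fun z hz => ?_
  rw [mul_sub, sub_eq_add_neg, AddChar.map_add_eq_mul, mul_comm]

lemma cayH_mulVec_char (T : Finset (ZMod n)) (t : ℝ) (r : ZMod n) :
    (cayH T t).mulVec (fun x => ψ (r * x)) =
      Complex.exp (-(Complex.I * t) * ∑ z ∈ T, ψ (-(r * z))) • fun x => ψ (r * x) := by
  apply exp_mulVec_eigen
  rw [Matrix.smul_mulVec, cayAdj_mulVec_char, smul_smul]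

lemma sum_psi_neg (T : Finset (ZMod n)) (hT : ∀ z ∈ T, -z ∈ T) (r : ZMod n) :
    ∑ z ∈ T, ψ (r * z) = ∑ z ∈ T, ψ (-(r * z)) := by
  refine Finset.sum_nbij' (fun z => -z) (fun z => -z) ?_ ?_ ?_ ?_ ?_
  · intro z hz; exact hT z hz
  · intro z hz; exact hT z hz
  · intro z _; simp
  · intro z _; simp
  · intro z _; rw [mul_neg, neg_neg]

lemma cayAdj_isSymm (T : Finset (ZMod n)) (hT : ∀ z ∈ T, -z ∈ T) : (cayAdj T).IsSymm := by
  ext x y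
  simp only [cayAdj, Matrix.transpose_apply, Matrix.of_apply]
  congr 1
  simp only [eq_iff_iff]
  constructor
  · intro h; have := hT _ h; rwa [neg_sub] at this
  · intro h; have := hT _ h; rwa [neg_sub] at this

lemma pairing (T : Finset (ZMod n)) (hT : ∀ z ∈ T, -z ∈ T) (t : ℝ) (a : ZMod n) (r : ZMod n) :
    ∑ x : ZMod n, ((cayH T t).mulVec (Pi.single a 1)) x * ψ (r * (a - x)) =
      Complex.exp (-(Complex.I * t) * ∑ z ∈ T, ψ (-(r * z))) := by
  have hHsymm : (cayH T t).IsSymm := by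
    unfold cayH
    apply Matrix.IsSymm.exp
    unfold Matrix.IsSymm
    rw [Matrix.transpose_smul, (cayAdj_isSymm T hT)]
  have hsingle : ∀ x : ZMod n, ((cayH T t).mulVec (Pi.single a 1)) x = (cayH T t) x a := by
    intro x
    simp [Matrix.mulVec, dotProduct, Pi.single_apply]
  have hsplit : ∀ x : ZMod n, ψ (r * (a - x)) = ψ (r * a) * ψ ((-r) * x) := by
    intro x
    rw [← AddChar.map_add_eq_mul]; ring_nf
  calc ∑ x : ZMod n, ((cayH T t).mulVec (Pi.single a 1)) x * ψ (r * (a - x))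
      = ψ (r * a) * ∑ x : ZMod n, (cayH T t) x a * ψ ((-r) * x) := by
        rw [Finset.mul_sum]; refine Finset.sum_congr rfl fun x _ => ?_
        rw [hsingle, hsplit]; ring
    _ = ψ (r * a) * ((cayH T t).mulVec (fun x => ψ ((-r) * x))) a := by
        congr 1
        simp only [Matrix.mulVec, dotProduct]
        refine Finset.sum_congr rfl fun x _ => ?_
        have : (cayH T t) x a = (cayH T t) a x := by
          conv_lhs => rw [← hHsymm]
          rfl
        rw [this]
    _ = Complex.exp (-(Complex.I * t) * ∑ z ∈ T, ψ (-(r * z))) := by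
        rw [cayH_mulVec_char]
        have h1 : ∑ z ∈ T, ψ (-(-r * z)) = ∑ z ∈ T, ψ (-(r * z)) := by
          simp only [neg_mul, neg_neg]
          exact sum_psi_neg T hT r
        rw [h1]
        simp only [Pi.smul_apply, smul_eq_mul]
        rw [← mul_assoc, mul_comm (ψ (r*a)), mul_assoc, ← AddChar.map_add_eq_mul]
        simp

lemma step_A {p : ℕ} (hpn : p ∣ n) (U : Finset (ZMod n)) (s : ℕ) :
    ∑ j ∈ Finset.range p, ∑ z ∈ U, ψ (-((((s + j * (n / p) : ℕ)) : ZMod n) * z))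
      = p * ∑ z ∈ U.filter (fun z => (((n / p : ℕ) : ZMod n)) * z = 0),
          ψ (-((s : ZMod n) * z)) := by
  set m : ZMod n := ((n / p : ℕ) : ZMod n) with hm
  have hterm : ∀ (j : ℕ) (z : ZMod n),
      ψ (-((((s + j * (n / p) : ℕ)) : ZMod n) * z))
        = ψ (-((s : ZMod n) * z)) * (ψ (-(m * z)))^j := by
    intro j z
    rw [← AddChar.map_nsmul_eq_pow, ← AddChar.map_add_eq_mul]
    congr 1
    rw [nsmul_eq_mul]
    push_cast
    ring
  have hwp : ∀ z : ZMod n, (ψ (-(m * z)))^p = 1 := by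
    intro z
    rw [← AddChar.map_nsmul_eq_pow]
    have : p • (-(m * z)) = 0 := by
      rw [nsmul_eq_mul, hm]
      have : (p : ZMod n) * ((n / p : ℕ) : ZMod n) = 0 := by
        rw [← Nat.cast_mul, Nat.mul_div_cancel' hpn, ZMod.natCast_self]
      rw [mul_neg, ← mul_assoc, this, zero_mul, neg_zero]
    rw [this, AddChar.map_zero_eq_one]
  have hgeom : ∀ z : ZMod n,
      ∑ j ∈ Finset.range p, (ψ (-(m * z)))^j = if m * z = 0 then (p : ℂ) else 0 := by
    intro z
    split_ifs with h
    · rw [h, neg_zero, AddChar.map_zero_eq_one]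
      simp
    · have hne : ψ (-(m * z)) ≠ 1 := by
        intro hcon
        rw [psi_eq_one_iff, neg_eq_zero] at hcon
        exact h hcon
      rw [geom_sum_eq hne, hwp z]
      simp
  rw [Finset.sum_comm]
  calc ∑ z ∈ U, ∑ j ∈ Finset.range p, ψ (-((((s + j * (n / p) : ℕ)) : ZMod n) * z))
      = ∑ z ∈ U, ψ (-((s : ZMod n) * z)) * (if m * z = 0 then (p : ℂ) else 0) := by
        refine Finset.sum_congr rfl fun z _ => ?_
        rw [← hgeom z, Finset.mul_sum]
        exact Finset.sum_congr rfl fun j _ => hterm j z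
    _ = ∑ z ∈ U.filter (fun z => m * z = 0), ψ (-((s : ZMod n) * z)) * (p : ℂ) := by
        rw [Finset.sum_filter]
        refine Finset.sum_congr rfl fun z _ => ?_
        split_ifs <;> simp
    _ = p * ∑ z ∈ U.filter (fun z => m * z = 0), ψ (-((s : ZMod n) * z)) := by
        rw [Finset.mul_sum]
        exact Finset.sum_congr rfl fun z _ => mul_comm _ _

lemma filter_cond_iff {p : ℕ} (hp : 0 < p) (hpn : p ∣ n) (z : ZMod n) :
    (((n / p : ℕ) : ZMod n)) * z = 0 ↔ p ∣ z.val := by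
  have hnp0 : 0 < n / p := Nat.div_pos (Nat.le_of_dvd (Nat.pos_of_ne_zero (NeZero.ne n)) hpn) hp
  conv_lhs => rw [← ZMod.natCast_zmod_val z]
  rw [← Nat.cast_mul, ZMod.natCast_eq_zero_iff]
  constructor
  · intro h
    have hn : n / p * p ∣ n / p * z.val := by rwa [Nat.div_mul_cancel hpn]
    exact (Nat.mul_dvd_mul_iff_left hnp0).mp hn
  · intro h
    obtain ⟨c, hc⟩ := h
    rw [hc, ← mul_assoc, Nat.div_mul_cancel hpn]
    exact dvd_mul_right n c

lemma mu_sum_rel {p : ℕ} (hp1 : 1 < p) (hpn : p ∣ n) (hnp : 2 < n / p)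
    (S : Finset (ZMod n)) (hScon : ∀ y ∈ S, ¬ p ∣ y.val) {s : ℕ} (hs0 : 0 < s) (hs2 : s ≤ 2) :
    ∑ j ∈ Finset.range p, ∑ z ∈ Finset.univ \ (S ∪ {0}),
        ψ (-((((s + j * (n / p) : ℕ)) : ZMod n) * z)) = -(p : ℂ) := by
  set m : ZMod n := ((n / p : ℕ) : ZMod n) with hm
  set P : ZMod n → Prop := fun z => m * z = 0 with hP
  have hnd : n = p * (n / p) := (Nat.mul_div_cancel' hpn).symm
  -- Step B : the full sum vanishes
  have hB : ∑ z ∈ Finset.univ.filter P, ψ (-((s : ZMod n) * z)) = 0 := by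
    have hAU := step_A hpn Finset.univ s
    have hzero : ∑ j ∈ Finset.range p, ∑ z : ZMod n,
        ψ (-((((s + j * (n / p) : ℕ)) : ZMod n) * z)) = 0 := by
      refine Finset.sum_eq_zero fun j hj => ?_
      have hj' : j < p := Finset.mem_range.mp hj
      have hlt : s + j * (n / p) < n := by
        obtain ⟨d, hd⟩ := hpn
        have hdp : n / p = d := by rw [hd]; exact Nat.mul_div_cancel_left d (by omega)
        rw [hdp]
        have h1 : j * d ≤ (p - 1) * d := Nat.mul_le_mul_right _ (by omega)
        have h3 : (p - 1) * d + d = p * d := by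
          rw [← Nat.succ_mul, Nat.succ_eq_add_one]
          congr 1
          omega
        have h4 : 2 < d := by rw [← hdp]; exact hnp
        omega
      have hc : (((s + j * (n / p) : ℕ)) : ZMod n) ≠ 0 := by
        rw [Ne, ZMod.natCast_eq_zero_iff]
        intro hdvd
        have := Nat.le_of_dvd (by omega) hdvd
        omega
      have : ∀ z : ZMod n, ψ (-((((s + j * (n / p) : ℕ)) : ZMod n) * z))
          = ψ ((-(((s + j * (n / p) : ℕ)) : ZMod n)) * z) := by
        intro z; rw [neg_mul]
      simp_rw [this]
      rw [psi_ortho, if_neg]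
      rw [neg_eq_zero]
      exact hc
    rw [hzero] at hAU
    have hp0 : (p : ℂ) ≠ 0 := Nat.cast_ne_zero.mpr (by omega)
    rcases mul_eq_zero.mp hAU.symm with h | h
    · exact absurd h hp0
    · exact h
  -- Step D : relate the filtered sums
  have h0P : (0 : ZMod n) ∈ Finset.univ.filter P := by
    simp [hP]
  have hTD : (Finset.univ \ (S ∪ {0})).filter P = Finset.univ.filter P \ {0} := by
    ext z
    simp only [Finset.mem_filter, Finset.mem_sdiff, Finset.mem_union, Finset.mem_singleton,
      Finset.mem_univ, true_and]
    constructor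
    · rintro ⟨hz, hPz⟩; exact ⟨hPz, fun h => hz (Or.inr h)⟩
    · rintro ⟨hPz, hz0⟩
      refine ⟨?_, hPz⟩
      rintro (hzS | hz0')
      · exact hScon z hzS ((filter_cond_iff (by omega) hpn z).mp hPz)
      · exact hz0 hz0'
  have hA := step_A hpn (Finset.univ \ (S ∪ {0})) s
  rw [hA, hTD, Finset.sum_sdiff_eq_sub (Finset.singleton_subset_iff.mpr h0P), hB]
  simp

lemma pow_eq_one_coprime {z : ℂ} (hz : z ≠ 0) {p q : ℕ} (hco : Nat.Coprime p q)
    (h1 : z ^ p = 1) (h2 : z ^ q = 1) : z = 1 := by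
  have hb : ((Nat.gcd p q : ℕ) : ℤ) = p * Nat.gcdA p q + q * Nat.gcdB p q :=
    Nat.gcd_eq_gcd_ab p q
  rw [hco] at hb
  have : z = z ^ ((1 : ℕ) : ℤ) := by simp
  rw [this, hb, zpow_add₀ hz, _root_.zpow_mul, _root_.zpow_mul, zpow_natCast, zpow_natCast, h1, h2]
  simp

theorem stmt_11_main (p q : ℕ) (hp : p.Prime) (hq : q.Prime)
    (hpodd : Odd p) (hqodd : Odd q) (hpq : p ≠ q) (hn : 2 * p * q ∣ n)
    (S : Finset (ZMod n)) (hS0 : (0 : ZMod n) ∉ S) (hSsym : ∀ y ∈ S, -y ∈ S)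
    (h : ∃ a b : ZMod n, a ≠ b ∧
        ExhibitsPGFR (Finset.univ \ (S ∪ {0})) a b) :
    ∃ y ∈ S, p ∣ y.val ∨ q ∣ y.val := by
  by_contra hcontra
  push_neg at hcontra
  obtain ⟨a, b, hab, α, β, t, hβ, hnorm, htend⟩ := h
  classical
  set T : Finset (ZMod n) := Finset.univ \ (S ∪ {0}) with hT
  set d : ZMod n := a - b with hdd'
  have hd : d ≠ 0 := sub_ne_zero_of_ne hab
  -- numeric facts
  have hn0 : n ≠ 0 := NeZero.ne n
  have hp2 : p ≠ 2 := fun h2 => by rw [h2, Nat.odd_iff] at hpodd; norm_num at hpodd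
  have hq2 : q ≠ 2 := fun h2 => by rw [h2, Nat.odd_iff] at hqodd; norm_num at hqodd
  have hp3 : 3 ≤ p := by have := hp.two_le; omega
  have hq3 : 3 ≤ q := by have := hq.two_le; omega
  obtain ⟨e, he⟩ := hn
  have he0 : e ≠ 0 := by rintro rfl; rw [Nat.mul_zero] at he; exact hn0 he
  have hpn : p ∣ n := ⟨2 * q * e, by rw [he]; ring⟩
  have hqn : q ∣ n := ⟨2 * p * e, by rw [he]; ring⟩
  have hnp_eq : n / p = 2 * q * e := by
    rw [he, show 2 * p * q * e = p * (2 * q * e) by ring]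
    exact Nat.mul_div_cancel_left _ (by omega)
  have hnq_eq : n / q = 2 * p * e := by
    rw [he, show 2 * p * q * e = q * (2 * p * e) by ring]
    exact Nat.mul_div_cancel_left _ (by omega)
  have hnp2 : 2 < n / p := by rw [hnp_eq]; nlinarith [hq3, Nat.one_le_iff_ne_zero.mpr he0]
  have hnq2 : 2 < n / q := by rw [hnq_eq]; nlinarith [hp3, Nat.one_le_iff_ne_zero.mpr he0]
  -- symmetry of T
  have hTsym : ∀ z ∈ T, -z ∈ T := by
    intro z hz
    simp only [hT, Finset.mem_sdiff, Finset.mem_univ, true_and, Finset.mem_union,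
      Finset.mem_singleton] at hz ⊢
    intro hcon
    apply hz
    rcases hcon with hcS | hc0
    · left; have := hSsym _ hcS; rwa [neg_neg] at this
    · right; rwa [neg_eq_zero] at hc0
  -- the limit values
  have hc : ∀ r : ZMod n,
      Tendsto (fun k => Complex.exp (-(Complex.I * (t k : ℂ)) * ∑ z ∈ T, ψ (-(r * z))))
        atTop (nhds (α + β * ψ (r * d))) := by
    intro r
    have hlim : Tendsto (fun k => ∑ x : ZMod n,
        ((cayH T (t k)).mulVec (Pi.single a 1)) x * ψ (r * (a - x))) atTop
        (nhds (∑ x : ZMod n, (α • (Pi.single a 1 : ZMod n → ℂ)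
          + β • (Pi.single b 1 : ZMod n → ℂ)) x * ψ (r * (a - x)))) := by
      apply tendsto_finset_sum
      intro x _
      exact (tendsto_pi_nhds.mp htend x).mul tendsto_const_nhds
    have hval : ∑ x : ZMod n, (α • (Pi.single a 1 : ZMod n → ℂ)
        + β • (Pi.single b 1 : ZMod n → ℂ)) x * ψ (r * (a - x)) = α + β * ψ (r * d) := by
      simp only [Pi.add_apply, Pi.smul_apply, smul_eq_mul, add_mul, Finset.sum_add_distrib,
        Pi.single_apply, ite_mul, mul_ite, mul_one, mul_zero, zero_mul,
        Finset.sum_ite_eq', Finset.mem_univ, if_true]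
      rw [sub_self, mul_zero, AddChar.map_zero_eq_one, mul_one, hdd']
    rw [hval] at hlim
    exact hlim.congr (fun k => pairing T hTsym (t k) a r)
  -- modulus one
  have hμim : ∀ r : ZMod n, (∑ z ∈ T, ψ (-(r * z))).im = 0 := by
    intro r
    have hconj : (starRingEnd ℂ) (∑ z ∈ T, ψ (-(r * z))) = ∑ z ∈ T, ψ (-(r * z)) := by
      rw [map_sum]
      exact (Finset.sum_congr rfl (fun z hz => by rw [psi_conj, neg_neg])).trans
        (sum_psi_neg T hTsym r)
    exact Complex.conj_eq_iff_im.mp hconj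
  have habs : ∀ r : ZMod n, ‖α + β * ψ (r * d)‖ = 1 := by
    intro r
    have h1 := (continuous_norm.tendsto _).comp (hc r)
    have h2 : ∀ k, ‖Complex.exp (-(Complex.I * (t k : ℂ))
        * ∑ z ∈ T, ψ (-(r * z)))‖ = 1 := by
      intro k
      rw [Complex.norm_exp]
      have hre : (-(Complex.I * (t k : ℂ)) * ∑ z ∈ T, ψ (-(r * z))).re = 0 := by
        simp [Complex.mul_re, Complex.mul_im, hμim r]
      rw [hre, Real.exp_zero]
    exact tendsto_nhds_unique (h1.congr h2) tendsto_const_nhds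
  -- product relations
  have hprod : ∀ pp : ℕ, 1 < pp → pp ∣ n → 2 < n / pp → (∀ y ∈ S, ¬ pp ∣ y.val) →
      ∏ j ∈ Finset.range pp, (α + β * ψ ((((1 + j * (n / pp) : ℕ)) : ZMod n) * d))
        = ∏ j ∈ Finset.range pp, (α + β * ψ ((((2 + j * (n / pp) : ℕ)) : ZMod n) * d)) := by
    intro pp hpp1 hppn hnpp hScon
    have hmu1 := mu_sum_rel (n := n) hpp1 hppn hnpp S hScon (s := 1) one_pos (by norm_num)
    have hmu2 := mu_sum_rel (n := n) hpp1 hppn hnpp S hScon (s := 2) two_pos (by norm_num)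
    rw [← hT] at hmu1 hmu2
    have hseq : ∀ k, ∏ j ∈ Finset.range pp, Complex.exp (-(Complex.I * (t k : ℂ))
          * ∑ z ∈ T, ψ (-((((1 + j * (n / pp) : ℕ)) : ZMod n) * z)))
        = ∏ j ∈ Finset.range pp, Complex.exp (-(Complex.I * (t k : ℂ))
          * ∑ z ∈ T, ψ (-((((2 + j * (n / pp) : ℕ)) : ZMod n) * z))) := by
      intro k
      rw [← Complex.exp_sum, ← Complex.exp_sum, ← Finset.mul_sum, ← Finset.mul_sum,
        hmu1, hmu2]
    have hl1 := tendsto_finset_prod (Finset.range pp)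
      (fun j (_ : j ∈ Finset.range pp) => hc ((((1 + j * (n / pp) : ℕ)) : ZMod n)))
    have hl2 := tendsto_finset_prod (Finset.range pp)
      (fun j (_ : j ∈ Finset.range pp) => hc ((((2 + j * (n / pp) : ℕ)) : ZMod n)))
    exact tendsto_nhds_unique (hl1.congr hseq) hl2
  have hcop : Nat.Coprime p q := (Nat.coprime_primes hp hq).mpr hpq
  have hP := hprod p (by omega) hpn hnp2 (fun y hy => (hcontra y hy).1)
  have hQ := hprod q (by omega) hqn hnq2 (fun y hy => (hcontra y hy).2)
  by_cases hα : α = 0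
  · -- PGST-like case
    subst hα
    simp only [zero_add] at hP hQ
    have key : ∀ pp : ℕ, 0 < pp →
        (∏ j ∈ Finset.range pp, (β * ψ ((((1 + j * (n / pp) : ℕ)) : ZMod n) * d))
          = ∏ j ∈ Finset.range pp, (β * ψ ((((2 + j * (n / pp) : ℕ)) : ZMod n) * d))) →
        ψ d ^ pp = 1 := by
      intro pp hpp0 hprd
      have hrhs : ∏ j ∈ Finset.range pp, (β * ψ ((((2 + j * (n / pp) : ℕ)) : ZMod n) * d))
          = (∏ j ∈ Finset.range pp, (β * ψ ((((1 + j * (n / pp) : ℕ)) : ZMod n) * d)))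
            * ψ d ^ pp := by
        rw [show ∏ j ∈ Finset.range pp, (β * ψ ((((2 + j * (n / pp) : ℕ)) : ZMod n) * d))
            = ∏ j ∈ Finset.range pp,
              ((β * ψ ((((1 + j * (n / pp) : ℕ)) : ZMod n) * d)) * ψ d) from
          Finset.prod_congr rfl fun j _ => by
            have hcast : (((2 + j * (n / pp) : ℕ)) : ZMod n)
                = (((1 + j * (n / pp) : ℕ)) : ZMod n) + 1 := by push_cast; ring
            rw [hcast, add_mul, one_mul, AddChar.map_add_eq_mul]
            ring]
        rw [Finset.prod_mul_distrib, Finset.prod_const, Finset.card_range]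
      have hX : (∏ j ∈ Finset.range pp, (β * ψ ((((1 + j * (n / pp) : ℕ)) : ZMod n) * d)))
          ≠ 0 :=
        Finset.prod_ne_zero_iff.mpr fun j _ => mul_ne_zero hβ (psi_ne_zero _)
      have hXX := hprd.trans hrhs
      have h1 : (∏ j ∈ Finset.range pp, (β * ψ ((((1 + j * (n / pp) : ℕ)) : ZMod n) * d)))
          * 1 = (∏ j ∈ Finset.range pp, (β * ψ ((((1 + j * (n / pp) : ℕ)) : ZMod n) * d)))
          * ψ d ^ pp := by rw [mul_one]; exact hXX
      exact (mul_left_cancel₀ hX h1).symm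
    have hkp : ψ d ^ p = 1 := key p (by omega) hP
    have hkq : ψ d ^ q = 1 := key q (by omega) hQ
    have hone : ψ d = 1 := pow_eq_one_coprime (psi_ne_zero d) hcop hkp hkq
    exact hd (psi_eq_one_iff.mp hone)
  · -- fractional revival case
    have hcb : (starRingEnd ℂ) β ≠ 0 := star_ne_zero.mpr hβ
    set w : ℂ := α * (starRingEnd ℂ) β with hw
    have hw0 : w ≠ 0 := mul_ne_zero hα hcb
    -- real part conditions
    have hre : ∀ r : ZMod n, (w * ψ (-(r * d))).re = 0 := by
      intro r
      have h1 := habs r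
      have h2 : Complex.normSq (α + β * ψ (r * d)) = 1 := by
        rw [← Complex.sq_norm, h1]; norm_num
      rw [Complex.normSq_add] at h2
      have h3 : Complex.normSq (β * ψ (r * d)) = Complex.normSq β := by
        rw [Complex.normSq_mul, Complex.normSq_eq_norm_sq, Complex.normSq_eq_norm_sq (ψ _),
          psi_abs, one_pow, mul_one]
      have h4 : Complex.normSq α + Complex.normSq β = 1 := by
        rw [Complex.normSq_eq_norm_sq, Complex.normSq_eq_norm_sq]; exact hnorm
      have h5 : (α * (starRingEnd ℂ) (β * ψ (r * d))).re = 0 := by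
        rw [h3] at h2; linarith
      rw [_root_.map_mul, psi_conj, ← mul_assoc] at h5
      exact h5
    have hre0 : w.re = 0 := by
      have h0 := hre 0
      rw [zero_mul, neg_zero, AddChar.map_zero_eq_one, mul_one] at h0
      exact h0
    have hre1 : (w * ψ d).re = 0 := by
      have h0 := hre (-1)
      rw [neg_mul, one_mul, neg_neg] at h0
      exact h0
    have hwim : w.im ≠ 0 := by
      intro h0
      exact hw0 (Complex.ext hre0 h0)
    have hψdim : (ψ d).im = 0 := by
      have hexp : (w * ψ d).re = w.re * (ψ d).re - w.im * (ψ d).im := Complex.mul_re _ _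
      rw [hre0, zero_mul, zero_sub, hre1] at hexp
      have h0 := hexp.symm
      rw [neg_eq_zero, mul_eq_zero] at h0
      rcases h0 with h | h
      · exact absurd h hwim
      · exact h
    have hψd : ψ d = -1 := by
      have hr : ψ d = ((ψ d).re : ℂ) := Complex.ext rfl (by simp [hψdim])
      have habs1 : |(ψ d).re| = 1 := by
        have h0 := psi_abs d
        rw [hr] at h0
        rwa [Complex.norm_real, Real.norm_eq_abs] at h0
      rcases (abs_eq (by norm_num : (0:ℝ) ≤ 1)).mp habs1 with h | h
      · exfalso
        apply hd
        apply psi_eq_one_iff.mp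
        rw [hr, h, Complex.ofReal_one]
      · rw [hr, h]
        norm_num
    have h2d : (2 : ZMod n) * d = 0 := by
      have h0 : ψ (d + d) = 1 := by
        rw [AddChar.map_add_eq_mul, hψd]
        norm_num
      rw [two_mul]
      exact psi_eq_one_iff.mp h0
    -- collapse the product relations
    have hcollapse : ∀ (pp k : ℕ), n / pp = 2 * k → ∀ s j : ℕ,
        ψ ((((s + j * (n / pp) : ℕ)) : ZMod n) * d) = ψ ((s : ZMod n) * d) := by
      intro pp k hk s j
      congr 1
      have h0 : (((s + j * (n / pp) : ℕ)) : ZMod n) * d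
          = (s : ZMod n) * d + ((j * k : ℕ) : ZMod n) * ((2 : ZMod n) * d) := by
        rw [hk]; push_cast; ring
      rw [h0, h2d, mul_zero, add_zero]
    have hc1 : ψ ((1 : ZMod n) * d) = -1 := by rw [one_mul, hψd]
    have hc2 : ψ ((2 : ZMod n) * d) = 1 := by rw [h2d, AddChar.map_zero_eq_one]
    have hPc : (α - β) ^ p = (α + β) ^ p := by
      have e1 : ∀ j ∈ Finset.range p, α + β * ψ ((((1 + j * (n / p) : ℕ)) : ZMod n) * d)
          = α - β := by
        intro j _
        rw [hcollapse p (q * e) (by rw [hnp_eq]; ring) 1 j, Nat.cast_one, hc1]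
        ring
      have e2 : ∀ j ∈ Finset.range p, α + β * ψ ((((2 + j * (n / p) : ℕ)) : ZMod n) * d)
          = α + β := by
        intro j _
        rw [hcollapse p (q * e) (by rw [hnp_eq]; ring) 2 j, Nat.cast_ofNat, hc2]
        ring
      rw [Finset.prod_congr rfl e1, Finset.prod_congr rfl e2, Finset.prod_const,
        Finset.prod_const, Finset.card_range] at hP
      exact hP
    have hQc : (α - β) ^ q = (α + β) ^ q := by
      have e1 : ∀ j ∈ Finset.range q, α + β * ψ ((((1 + j * (n / q) : ℕ)) : ZMod n) * d)
          = α - β := by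
        intro j _
        rw [hcollapse q (p * e) (by rw [hnq_eq]; ring) 1 j, Nat.cast_one, hc1]
        ring
      have e2 : ∀ j ∈ Finset.range q, α + β * ψ ((((2 + j * (n / q) : ℕ)) : ZMod n) * d)
          = α + β := by
        intro j _
        rw [hcollapse q (p * e) (by rw [hnq_eq]; ring) 2 j, Nat.cast_ofNat, hc2]
        ring
      rw [Finset.prod_congr rfl e1, Finset.prod_congr rfl e2, Finset.prod_const,
        Finset.prod_const, Finset.card_range] at hQ
      exact hQ
    have hne1 : α - β ≠ 0 := by
      intro h0
      have ha := habs 1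
      rw [hc1] at ha
      have ha' : ‖α - β‖ = 1 := by
        have heq : α + β * (-1) = α - β := by ring
        rwa [heq] at ha
      rw [h0] at ha'
      simp at ha'
    have hne2 : α + β ≠ 0 := by
      intro h0
      have ha := habs 2
      rw [hc2, mul_one] at ha
      rw [h0] at ha
      simp at ha
    have hz : (α - β) / (α + β) = 1 := by
      apply pow_eq_one_coprime (div_ne_zero hne1 hne2) hcop
      · rw [div_pow, hPc, div_self (pow_ne_zero _ hne2)]
      · rw [div_pow, hQc, div_self (pow_ne_zero _ hne2)]
    have heq2 : α - β = α + β := by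
      field_simp at hz
      exact hz
    apply hβ
    linear_combination (-1/2 : ℂ) * heq2

end CayleyHelpers

theorem stmt_11 (p q n : ℕ) [NeZero n] (hp : p.Prime) (hq : q.Prime)
    (hpodd : Odd p) (hqodd : Odd q) (hpq : p ≠ q) (hn : 2 * p * q ∣ n)
    (S : Finset (ZMod n)) (hS0 : (0 : ZMod n) ∉ S) (hSsym : ∀ y ∈ S, -y ∈ S)
    (h : ∃ a b : ZMod n, a ≠ b ∧
        ExhibitsPGFR (Finset.univ \ (S ∪ {0})) a b) :
    ∃ y ∈ S, p ∣ y.val ∨ q ∣ y.val := by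
  exact stmt_11_main p q hp hq hpodd hqodd hpq hn S hS0 hSsym h
end

section
/- Let p and q be distinct odd primes and let n be a positive integer divisible by 2pq. Then the complement of the n-cycle, C̄_n = Cay(ℤ_n, ℤ_n \ {0, 1, n−1}), does not exhibit PGFR between any pair of distinct vertices. -/
open Matrix Filter

/-! ### Auxiliary development -/

section ExpEigen
variable {G : Type*} [Fintype G] [DecidableEq G]

lemma exp_mulVec_eigen_s12 (A : Matrix G G ℂ) (v : G → ℂ) (μ : ℂ)
    (h : A.mulVec v = μ • v) :
    (NormedSpace.exp A).mulVec v = Complex.exp μ • v := by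
  letI : SeminormedRing (Matrix G G ℂ) := Matrix.linftyOpSemiNormedRing
  letI : NormedRing (Matrix G G ℂ) := Matrix.linftyOpNormedRing
  letI : NormedAlgebra ℂ (Matrix G G ℂ) := Matrix.linftyOpNormedAlgebra
  have hpow : ∀ k : ℕ, (A ^ k).mulVec v = (μ ^ k) • v := by
    intro k
    induction k with
    | zero => simp [Matrix.one_mulVec]
    | succ k ih =>
      rw [pow_succ', pow_succ']
      rw [← Matrix.mulVec_mulVec, ih, Matrix.mulVec_smul, h, smul_smul, mul_comm]
  have hsum : Summable (fun k : ℕ => ((Nat.factorial k : ℂ)⁻¹) • A ^ k) :=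
    NormedSpace.expSeries_summable' A
  have hsum2 : Summable (fun k : ℕ => ((Nat.factorial k : ℂ)⁻¹) • μ ^ k) :=
    NormedSpace.expSeries_summable' μ
  let L : Matrix G G ℂ →ₗ[ℂ] (G → ℂ) :=
    { toFun := fun M => M.mulVec v
      map_add' := fun M N => Matrix.add_mulVec M N v
      map_smul' := fun c M => Matrix.smul_mulVec c M v }
  have hL : Continuous L := LinearMap.continuous_of_finiteDimensional L
  have key : (NormedSpace.exp A).mulVec v
      = ∑' k : ℕ, (((Nat.factorial k : ℂ)⁻¹) • A ^ k).mulVec v := by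
    rw [NormedSpace.exp_eq_tsum ℂ]
    exact (hsum.hasSum.map L hL).tsum_eq.symm
  rw [key]
  have : ∀ k : ℕ, (((Nat.factorial k : ℂ)⁻¹) • A ^ k).mulVec v
      = (((Nat.factorial k : ℂ)⁻¹) • μ ^ k) • v := by
    intro k
    rw [Matrix.smul_mulVec, hpow, smul_smul, smul_eq_mul]
  simp_rw [this]
  rw [hsum2.tsum_smul_const, Complex.exp_eq_exp_ℂ, NormedSpace.exp_eq_tsum ℂ]

end ExpEigen

section Char
variable (n : ℕ) [NeZero n]

noncomputable def zetaC (n : ℕ) : ℂ := Complex.exp (2 * Real.pi * Complex.I / n)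

lemma zetaC_prim : IsPrimitiveRoot (zetaC n) n :=
  Complex.isPrimitiveRoot_exp n (NeZero.ne n)

lemma zetaC_pow_n : zetaC n ^ n = 1 := (zetaC_prim n).pow_eq_one

noncomputable def chc (x : ZMod n) : ℂ := zetaC n ^ x.val

lemma zetaC_pow_mod (k : ℕ) : zetaC n ^ (k % n) = zetaC n ^ k := by
  conv_rhs => rw [← Nat.mod_add_div k n, pow_add, pow_mul, zetaC_pow_n, one_pow, mul_one]

lemma chc_natCast (k : ℕ) : chc n (k : ZMod n) = zetaC n ^ k := by
  rw [chc, ZMod.val_natCast, zetaC_pow_mod]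

lemma chc_zero : chc n 0 = 1 := by simp [chc]

lemma chc_add (x y : ZMod n) : chc n (x + y) = chc n x * chc n y := by
  rw [chc, chc, chc, ZMod.val_add, zetaC_pow_mod, pow_add]

lemma chc_mul_neg (x : ZMod n) : chc n x * chc n (-x) = 1 := by
  rw [← chc_add, add_neg_cancel, chc_zero]

lemma chc_neg (x : ZMod n) : chc n (-x) = (chc n x)⁻¹ := by
  apply eq_inv_of_mul_eq_one_right
  rw [← chc_add, add_neg_cancel, chc_zero]

lemma chc_eq_one_iff {x : ZMod n} : chc n x = 1 ↔ x = 0 := by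
  rw [chc, (zetaC_prim n).pow_eq_one_iff_dvd]
  constructor
  · intro h
    have hlt := x.val_lt
    have hv : x.val = 0 := by
      rcases Nat.eq_zero_or_pos x.val with h0 | h0
      · exact h0
      · exact absurd (Nat.le_of_dvd h0 h) (not_le.mpr hlt)
    exact (ZMod.val_eq_zero x).mp hv
  · rintro rfl; simp

lemma sum_chc_eq_zero {c : ZMod n} (hc : c ≠ 0) :
    ∑ x : ZMod n, chc n (c * x) = 0 := by
  have key : (∑ x : ZMod n, chc n (c * x)) * chc n c = ∑ x : ZMod n, chc n (c * x) := by
    rw [Finset.sum_mul]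
    simp_rw [← chc_add]
    exact Fintype.sum_equiv (Equiv.addRight (1 : ZMod n)) _ _
      (fun x => by simp [mul_add])
  have h1 : chc n c ≠ 1 := fun h => hc ((chc_eq_one_iff n).mp h)
  have h2 : (∑ x : ZMod n, chc n (c * x)) * (chc n c - 1) = 0 := by
    rw [mul_sub, mul_one, key, sub_self]
  rcases mul_eq_zero.mp h2 with h | h
  · exact h
  · exact absurd (sub_eq_zero.mp h) h1

/-- The connection set of the complement of the `n`-cycle. -/
def Sc : Finset (ZMod n) := Finset.univ \ {0, 1, -1}

noncomputable def lamc (r : ZMod n) : ℂ := ∑ s ∈ Sc n, chc n (r * s)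

lemma mem_Sc {s : ZMod n} : s ∈ Sc n ↔ s ≠ 0 ∧ s ≠ 1 ∧ s ≠ -1 := by
  simp [Sc]

lemma neg_mem_Sc {s : ZMod n} (h : s ∈ Sc n) : -s ∈ Sc n := by
  rw [mem_Sc] at h ⊢
  refine ⟨by simpa using h.1, ?_, ?_⟩
  · exact fun hc => h.2.2 (by rwa [neg_eq_iff_eq_neg] at hc)
  · exact fun hc => h.2.1 (neg_inj.mp hc)

lemma lamc_neg (r : ZMod n) : lamc n (-r) = lamc n r := by
  unfold lamc
  refine Finset.sum_equiv (Equiv.neg (ZMod n)) (fun i => ?_) (fun i _ => ?_)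
  · constructor
    · exact fun h => neg_mem_Sc n h
    · intro h; simpa using neg_mem_Sc n h
  · show chc n (-r * i) = chc n (r * (Equiv.neg (ZMod n) i))
    simp only [Equiv.neg_apply]
    ring_nf

lemma adj_eigen (r : ZMod n) :
    (cayAdj (Sc n)).mulVec (fun x => chc n (r * x)) = lamc n r • (fun x => chc n (r * x)) := by
  funext x
  show ∑ y, (if x - y ∈ Sc n then (1:ℂ) else 0) * chc n (r * y) = _
  have step1 : ∑ y : ZMod n, (if x - y ∈ Sc n then (1:ℂ) else 0) * chc n (r * y)
      = ∑ s : ZMod n, (if s ∈ Sc n then chc n (r * (x - s)) else 0) := by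
    refine Fintype.sum_equiv (Equiv.subLeft x) _ _ (fun y => ?_)
    simp only [Equiv.subLeft_apply, sub_sub_cancel, ite_mul, one_mul, zero_mul]
  rw [step1]
  rw [Finset.sum_ite_mem, Finset.univ_inter]
  have step2 : ∀ s ∈ Sc n, chc n (r * (x - s)) = chc n (r * x) * chc n (r * -s) := by
    intro s _
    rw [← chc_add]; ring_nf
  rw [Finset.sum_congr rfl step2, ← Finset.mul_sum]
  have step3 : ∑ s ∈ Sc n, chc n (r * -s) = lamc n r := by
    rw [← lamc_neg]
    unfold lamc
    exact Finset.sum_congr rfl (fun s _ => by ring_nf)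
  rw [step3]
  simp [mul_comm]

lemma adj_symm : (cayAdj (Sc n))ᵀ = cayAdj (Sc n) := by
  ext x y
  show (if y - x ∈ Sc n then (1:ℂ) else 0) = (if x - y ∈ Sc n then 1 else 0)
  have : y - x ∈ Sc n ↔ x - y ∈ Sc n := by
    constructor
    · intro h; simpa using neg_mem_Sc n h
    · intro h; simpa using neg_mem_Sc n h
  simp [this]

lemma cayH_symm (t : ℝ) : (cayH (Sc n) t)ᵀ = cayH (Sc n) t := by
  unfold cayH
  rw [← Matrix.exp_transpose, Matrix.transpose_smul, adj_symm]

lemma cayH_eigen (t : ℝ) (r : ZMod n) :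
    (cayH (Sc n) t).mulVec (fun x => chc n (r * x))
      = Complex.exp (-(Complex.I * t) * lamc n r) • (fun x => chc n (r * x)) := by
  apply exp_mulVec_eigen_s12
  rw [Matrix.smul_mulVec, adj_eigen, smul_smul]

lemma key_id (t : ℝ) (r a : ZMod n) :
    Complex.exp (-(Complex.I * t) * lamc n r)
      = ∑ x : ZMod n, (cayH (Sc n) t).mulVec (Pi.single a 1) x
          * (chc n (r * a) * chc n (-(r * x))) := by
  set u : ZMod n → ℂ := fun x => chc n (r * a) * chc n (-r * x) with hu
  have hrw : ∀ x : ZMod n, chc n (r * a) * chc n (-(r * x)) = u x := by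
    intro x; simp only [hu]; ring_nf
  calc Complex.exp (-(Complex.I * t) * lamc n r)
      = Complex.exp (-(Complex.I * t) * lamc n r) * (u ⬝ᵥ Pi.single a 1) := by
        rw [dotProduct_single, mul_one]
        have : u a = chc n (r * a) * chc n (-(r*a)) := by simp only [hu]; ring_nf
        rw [this, ← chc_add]
        simp [chc_zero]
    _ = (Complex.exp (-(Complex.I * t) * lamc n r) • u) ⬝ᵥ Pi.single a 1 := by
        rw [smul_dotProduct]; rfl
    _ = ((cayH (Sc n) t) *ᵥ u) ⬝ᵥ Pi.single a 1 := by
        congr 1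
        have : u = chc n (r * a) • (fun x => chc n (-r * x)) := by
          funext x; simp [hu, smul_eq_mul]
        rw [this, Matrix.mulVec_smul, cayH_eigen, lamc_neg, smul_comm]
    _ = (u ᵥ* (cayH (Sc n) t)) ⬝ᵥ Pi.single a 1 := by
        rw [← cayH_symm, Matrix.vecMul_transpose, cayH_symm]
    _ = u ⬝ᵥ ((cayH (Sc n) t) *ᵥ Pi.single a 1) := (Matrix.dotProduct_mulVec _ _ _).symm
    _ = ∑ x : ZMod n, (cayH (Sc n) t).mulVec (Pi.single a 1) x
          * (chc n (r * a) * chc n (-(r * x))) := by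
        simp only [dotProduct, hrw]
        exact Finset.sum_congr rfl (fun x _ => mul_comm _ _)

lemma lam_formula (h3 : 3 ≤ n) {r : ZMod n} (hr : r ≠ 0) :
    lamc n r = -(1 + chc n r + chc n (-r)) := by
  haveI : Fact (1 < n) := ⟨by omega⟩
  have h01 : (0 : ZMod n) ≠ 1 := fun h => one_ne_zero h.symm
  have h0m : (0 : ZMod n) ≠ -1 := by
    intro h; exact one_ne_zero (neg_eq_zero.mp h.symm)
  have h1m : (1 : ZMod n) ≠ -1 := by
    intro h
    have h2 : ((2 : ℕ) : ZMod n) = 0 := by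
      push_cast
      linear_combination h
    rw [ZMod.natCast_eq_zero_iff] at h2
    have := Nat.le_of_dvd (by norm_num) h2
    omega
  have hsub : ({0, 1, -1} : Finset (ZMod n)) ⊆ Finset.univ := Finset.subset_univ _
  unfold lamc Sc
  rw [Finset.sum_sdiff_eq_sub hsub, sum_chc_eq_zero n hr]
  rw [Finset.sum_insert (by simp [h01, h0m]), Finset.sum_insert (by simp [h1m])]
  rw [Finset.sum_singleton]
  rw [mul_zero, chc_zero, mul_one, mul_neg_one]
  ring

lemma geom_aux (P : ℕ) (c w : ℂ) (hw : w ≠ 1) (hwP : w ^ P = 1) :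
    ∑ j ∈ Finset.range P, c * w ^ j = 0 := by
  rw [← Finset.mul_sum, geom_sum_eq hw, hwP]
  simp

lemma sum_lam_eq (h3 : 3 ≤ n) (P c0 : ℕ) (hP : P ∣ n) (hm0 : 0 < n / P) (hmn : n / P < n)
    (hj : ∀ j < P, 0 < c0 + j * (n / P) ∧ c0 + j * (n / P) < n) :
    ∑ j ∈ Finset.range P, lamc n ((c0 + j * (n / P) : ℕ) : ZMod n) = -(P : ℂ) := by
  have hne : ∀ j < P, ((c0 + j * (n / P) : ℕ) : ZMod n) ≠ 0 := by
    intro j hjP h0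
    rw [ZMod.natCast_eq_zero_iff] at h0
    have := hj j hjP
    have := Nat.le_of_dvd this.1 h0
    omega
  have hwm : zetaC n ^ (n / P) ≠ 1 := by
    intro h
    rw [(zetaC_prim n).pow_eq_one_iff_dvd] at h
    exact absurd (Nat.le_of_dvd hm0 h) (not_le.mpr hmn)
  have hwP : (zetaC n ^ (n / P)) ^ P = 1 := by
    rw [← pow_mul, Nat.div_mul_cancel hP, (zetaC_prim n).pow_eq_one]
  have hwm' : (zetaC n ^ (n / P))⁻¹ ≠ 1 := by
    intro h; exact hwm (inv_eq_one.mp h)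
  have hwP' : ((zetaC n ^ (n / P))⁻¹) ^ P = 1 := by
    rw [inv_pow, hwP, inv_one]
  have step : ∀ j ∈ Finset.range P,
      lamc n ((c0 + j * (n / P) : ℕ) : ZMod n)
        = -1 - (zetaC n ^ c0) * (zetaC n ^ (n / P)) ^ j
            - ((zetaC n)⁻¹ ^ c0) * ((zetaC n ^ (n / P))⁻¹) ^ j := by
    intro j hjr
    rw [Finset.mem_range] at hjr
    rw [lam_formula n h3 (hne j hjr), chc_neg, chc_natCast,
        show c0 + j * (n / P) = c0 + (n / P) * j from by ring,
        pow_add, pow_mul]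
    rw [mul_inv, ← inv_pow, ← inv_pow]
    ring
  rw [Finset.sum_congr rfl step]
  simp only [sub_eq_add_neg, Finset.sum_add_distrib, neg_mul, Finset.sum_neg_distrib]
  rw [geom_aux P _ _ hwm hwP, geom_aux P _ _ hwm' hwP']
  simp

end Char

theorem stmt_12 (p q n : ℕ) [NeZero n] (hp : p.Prime) (hq : q.Prime)
    (hpodd : Odd p) (hqodd : Odd q) (hpq : p ≠ q) (hn : 2 * p * q ∣ n) :
    ∀ a b : ZMod n, a ≠ b →
      ¬ ExhibitsPGFR ((Finset.univ : Finset (ZMod n)) \ {0, 1, -1}) a b := by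
  intro a b hab hPG
  have hSc : ((Finset.univ : Finset (ZMod n)) \ {0, 1, -1}) = Sc n := rfl
  rw [hSc] at hPG
  obtain ⟨α, β, t, hβ, hnorm, htend⟩ := hPG
  -- numeric facts
  have hn0 : n ≠ 0 := NeZero.ne n
  have hp2 : p ≠ 2 := by
    rintro rfl
    exact (Nat.not_odd_iff_even.mpr (by norm_num)) hpodd
  have hq2 : q ≠ 2 := by
    rintro rfl
    exact (Nat.not_odd_iff_even.mpr (by norm_num)) hqodd
  have hp3 : 3 ≤ p := by have := hp.two_le; omega
  have hq3 : 3 ≤ q := by have := hq.two_le; omega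
  obtain ⟨c, hc⟩ := hn
  have hcpos : 0 < c := by
    rcases Nat.eq_zero_or_pos c with rfl | h
    · exact absurd (by omega : n = 0) hn0
    · exact h
  have h3 : 3 ≤ n := by
    have h1 : 2 * 3 * 3 * 1 ≤ 2 * p * q * c :=
      Nat.mul_le_mul (Nat.mul_le_mul (Nat.mul_le_mul le_rfl hp3) hq3) hcpos
    omega
  -- setup
  set d : ZMod n := b - a with hd
  have hdne : d ≠ 0 := sub_ne_zero.mpr (fun h => hab h.symm)
  -- convergence of eigenvalue phases
  have hcomp : ∀ x : ZMod n,
      Tendsto (fun k => (cayH (Sc n) (t k)).mulVec (Pi.single a 1) x) atTop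
        (nhds ((α • (Pi.single a 1 : ZMod n → ℂ) + β • (Pi.single b 1 : ZMod n → ℂ)) x)) :=
    fun x => tendsto_pi_nhds.mp htend x
  have hW : ∀ r : ZMod n,
      Tendsto (fun k => Complex.exp (-(Complex.I * (t k : ℂ)) * lamc n r)) atTop
        (nhds (α + β * chc n (-(r * d)))) := by
    intro r
    have hsum : Tendsto
        (fun k => ∑ x : ZMod n, (cayH (Sc n) (t k)).mulVec (Pi.single a 1) x
            * (chc n (r * a) * chc n (-(r * x)))) atTop
        (nhds (∑ x : ZMod n,
            (α • (Pi.single a 1 : ZMod n → ℂ) + β • (Pi.single b 1 : ZMod n → ℂ)) x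
              * (chc n (r * a) * chc n (-(r * x))))) :=
      tendsto_finset_sum _ (fun x _ => (hcomp x).mul_const _)
    have heq : (fun k => Complex.exp (-(Complex.I * (t k : ℂ)) * lamc n r))
        = fun k => ∑ x : ZMod n, (cayH (Sc n) (t k)).mulVec (Pi.single a 1) x
            * (chc n (r * a) * chc n (-(r * x))) :=
      funext fun k => key_id n (t k) r a
    have hval : (∑ x : ZMod n,
        (α • (Pi.single a 1 : ZMod n → ℂ) + β • (Pi.single b 1 : ZMod n → ℂ)) x
          * (chc n (r * a) * chc n (-(r * x))))
        = α + β * chc n (-(r * d)) := by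
      simp only [Pi.add_apply, Pi.smul_apply, smul_eq_mul, add_mul, Finset.sum_add_distrib,
        Pi.single_apply, mul_ite, ite_mul, mul_one, mul_zero, one_mul, zero_mul,
        Finset.sum_ite_eq', Finset.mem_univ, if_true]
      rw [chc_mul_neg]
      have : chc n (r * a) * chc n (-(r * b)) = chc n (-(r * d)) := by
        rw [← chc_add]
        congr 1
        rw [hd]; ring
      rw [this]
      ring
    rw [heq, ← hval]
    exact hsum
  -- symmetry forces `chc d = chc (-d)`
  have hch : chc n (-d) = chc n d := by
    have h1 := hW 1
    have h2 := hW (-1)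
    have e1 : -((1 : ZMod n) * d) = -d := by ring
    have e2 : -((-1 : ZMod n) * d) = d := by ring
    rw [e1] at h1
    rw [e2] at h2
    have hfun : (fun k => Complex.exp (-(Complex.I * (t k : ℂ)) * lamc n (-1)))
        = fun k => Complex.exp (-(Complex.I * (t k : ℂ)) * lamc n 1) :=
      funext fun k => by rw [lamc_neg]
    rw [hfun] at h2
    have huniq := tendsto_nhds_unique h1 h2
    have := add_left_cancel huniq
    exact mul_left_cancel₀ hβ this
  have h2d : d + d = 0 := by
    have : chc n (d + d) = 1 := by
      rw [chc_add]
      nth_rewrite 2 [← hch]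
      exact chc_mul_neg n d
    exact (chc_eq_one_iff n).mp this
  -- `(m : ZMod n) * d = 0` for even `m`
  have heven : ∀ m : ℕ, 2 ∣ m → ((m : ℕ) : ZMod n) * d = 0 := by
    rintro m ⟨m', rfl⟩
    push_cast
    have : (2 : ZMod n) * d = 0 := by rw [two_mul, h2d]
    calc (2 : ZMod n) * (m' : ZMod n) * d = (m' : ZMod n) * ((2 : ZMod n) * d) := by ring
      _ = 0 := by rw [this, mul_zero]
  -- chc d = -1
  have hchd : chc n d = -1 := by
    have hsq : chc n d * chc n d = 1 := by
      nth_rewrite 2 [← hch]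
      exact chc_mul_neg n d
    have hne1 : chc n d ≠ 1 := fun h => hdne ((chc_eq_one_iff n).mp h)
    have : (chc n d - 1) * (chc n d + 1) = 0 := by linear_combination hsq
    rcases mul_eq_zero.mp this with h | h
    · exact absurd (sub_eq_zero.mp h) hne1
    · linear_combination h
  -- main engine : for suitable prime divisors P, (α - β)^P = (α + β)^P
  have main : ∀ P : ℕ, 2 ≤ P → P ∣ n → 2 ∣ (n / P) → 2 < n / P →
      (α - β) ^ P = (α + β) ^ P := by
    intro P hP2 hPn hm2 hmgt
    set m : ℕ := n / P with hm
    have hPm : P * m = n := Nat.mul_div_cancel' hPn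
    have hm0 : 0 < m := by omega
    have hmn : m < n := by nlinarith [hPm, hm0, hP2]
    have hbound : ∀ c0 : ℕ, 0 < c0 → c0 ≤ 2 → ∀ j < P, 0 < c0 + j * m ∧ c0 + j * m < n := by
      intro c0 hc0 hc2 j hjP
      constructor
      · omega
      · have h1 : j * m ≤ (P - 1) * m := Nat.mul_le_mul_right m (by omega)
        have h2 : (P - 1) * m = P * m - m := by
          rw [Nat.sub_mul, one_mul]
        omega
    have hs1 := sum_lam_eq n h3 P 1 hPn hm0 hmn (hbound 1 (by omega) (by omega))
    have hs2 := sum_lam_eq n h3 P 2 hPn hm0 hmn (hbound 2 (by omega) (by omega))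
    -- the two phase products agree for every k
    have prodeq : ∀ k,
        (∏ j ∈ Finset.range P,
          Complex.exp (-(Complex.I * (t k : ℂ)) * lamc n ((1 + j * m : ℕ) : ZMod n)))
        = ∏ j ∈ Finset.range P,
          Complex.exp (-(Complex.I * (t k : ℂ)) * lamc n ((2 + j * m : ℕ) : ZMod n)) := by
      intro k
      rw [← Complex.exp_sum, ← Complex.exp_sum, ← Finset.mul_sum, ← Finset.mul_sum,
        hs1, hs2]
    have hT1 : Tendsto (fun k => ∏ j ∈ Finset.range P,
        Complex.exp (-(Complex.I * (t k : ℂ)) * lamc n ((1 + j * m : ℕ) : ZMod n))) atTop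
        (nhds (∏ j ∈ Finset.range P, (α + β * chc n (-(((1 + j * m : ℕ) : ZMod n) * d))))) :=
      tendsto_finset_prod _ (fun j _ => hW _)
    have hT2 : Tendsto (fun k => ∏ j ∈ Finset.range P,
        Complex.exp (-(Complex.I * (t k : ℂ)) * lamc n ((2 + j * m : ℕ) : ZMod n))) atTop
        (nhds (∏ j ∈ Finset.range P, (α + β * chc n (-(((2 + j * m : ℕ) : ZMod n) * d))))) :=
      tendsto_finset_prod _ (fun j _ => hW _)
    have hfun : (fun k => ∏ j ∈ Finset.range P,
        Complex.exp (-(Complex.I * (t k : ℂ)) * lamc n ((1 + j * m : ℕ) : ZMod n)))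
        = fun k => ∏ j ∈ Finset.range P,
        Complex.exp (-(Complex.I * (t k : ℂ)) * lamc n ((2 + j * m : ℕ) : ZMod n)) :=
      funext prodeq
    rw [hfun] at hT1
    have huniq := tendsto_nhds_unique hT1 hT2
    -- evaluate the limit products
    have hv1 : ∀ j : ℕ, ((1 + j * m : ℕ) : ZMod n) * d = d := by
      intro j
      push_cast
      obtain ⟨m', hm'⟩ := hm2
      have : ((j * m : ℕ) : ZMod n) * d = 0 := heven _ ⟨j * m', by rw [hm']; ring⟩
      push_cast at this
      linear_combination this
    have hv2 : ∀ j : ℕ, ((2 + j * m : ℕ) : ZMod n) * d = 0 := by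
      intro j
      push_cast
      obtain ⟨m', hm'⟩ := hm2
      have h1 : ((j * m : ℕ) : ZMod n) * d = 0 := heven _ ⟨j * m', by rw [hm']; ring⟩
      have h2 : ((2 : ℕ) : ZMod n) * d = 0 := heven 2 (by norm_num)
      push_cast at h1 h2
      linear_combination h1 + h2
    have hw1 : ∀ j : ℕ, (α + β * chc n (-(((1 + j * m : ℕ) : ZMod n) * d))) = α - β := by
      intro j
      rw [hv1 j, hch, hchd]
      ring
    have hw2 : ∀ j : ℕ, (α + β * chc n (-(((2 + j * m : ℕ) : ZMod n) * d))) = α + β := by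
      intro j
      rw [hv2 j, neg_zero, chc_zero, mul_one]
    rw [Finset.prod_congr rfl (fun j _ => hw1 j), Finset.prod_congr rfl (fun j _ => hw2 j),
      Finset.prod_const, Finset.prod_const, Finset.card_range] at huniq
    exact huniq
  -- apply with P = p and P = q
  have hnp : n / p = 2 * q * c := by
    rw [hc, show 2 * p * q * c = p * (2 * q * c) from by ring, Nat.mul_div_cancel_left _ (by omega)]
  have hnq : n / q = 2 * p * c := by
    rw [hc, show 2 * p * q * c = q * (2 * p * c) from by ring, Nat.mul_div_cancel_left _ (by omega)]
  have hppow := main p (by omega) ⟨2 * q * c, by rw [hc]; ring⟩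
    (by rw [hnp]; exact ⟨q * c, by ring⟩) (by rw [hnp]; nlinarith)
  have hqpow := main q (by omega) ⟨2 * p * c, by rw [hc]; ring⟩
    (by rw [hnq]; exact ⟨p * c, by ring⟩) (by rw [hnq]; nlinarith)
  -- endgame
  by_cases hu : α + β = 0
  · rw [hu, zero_pow (by omega : p ≠ 0)] at hppow
    have h0 : α - β = 0 := pow_eq_zero_iff (by omega : p ≠ 0) |>.mp hppow
    have : β = 0 := by linear_combination (hu - h0) / 2
    exact hβ this
  · set ρ : ℂ := (α - β) / (α + β) with hρ
    have hρp : ρ ^ p = 1 := by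
      rw [hρ, div_pow, hppow, div_self (pow_ne_zero _ hu)]
    have hρq : ρ ^ q = 1 := by
      rw [hρ, div_pow, hqpow, div_self (pow_ne_zero _ hu)]
    have hop : orderOf ρ ∣ p := orderOf_dvd_of_pow_eq_one hρp
    have hoq : orderOf ρ ∣ q := orderOf_dvd_of_pow_eq_one hρq
    have hcop : Nat.Coprime p q := (Nat.coprime_primes hp hq).mpr hpq
    have ho1 : orderOf ρ = 1 :=
      Nat.eq_one_of_dvd_one (hcop ▸ Nat.dvd_gcd hop hoq)
    have hρ1 : ρ = 1 := orderOf_eq_one_iff.mp ho1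
    rw [hρ, div_eq_one_iff_eq hu] at hρ1
    have hβ0 : β = 0 := by linear_combination -hρ1 / 2
    exact hβ hβ0
end

section
/- Let p be an odd prime, let h ≥ 3 and s ≥ 1 be integers, and set n = 2^h·p^s. Then the complement of the n-cycle, C̄_n = Cay(ℤ_n, ℤ_n \ {0, 1, n−1}), does not exhibit PGFR between any pair of distinct vertices. -/
open Matrix Filter

namespace PGFRaux

/-! ### A primitive `n`-th root of unity and the characters of `ZMod n` -/

noncomputable def ww (n : ℕ) : ℂ := Complex.exp (-(2 * Real.pi * Complex.I) / n)

lemma ww_prim {n : ℕ} (hn : n ≠ 0) : IsPrimitiveRoot (ww n) n := by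
  have h := Complex.isPrimitiveRoot_exp n hn
  have : ww n = (Complex.exp (2 * Real.pi * Complex.I / n))⁻¹ := by
    rw [ww, neg_div, Complex.exp_neg]
  rw [this]; exact h.inv

lemma ww_ne_zero (n : ℕ) : ww n ≠ 0 := Complex.exp_ne_zero _

lemma ww_abs (n : ℕ) : ‖ww n‖ = 1 := by
  rw [ww, Complex.norm_exp]
  norm_num [Complex.div_re]

variable {n : ℕ} [NeZero n]

lemma ww_pow_n : ww n ^ n = 1 := (ww_prim (NeZero.ne n)).pow_eq_one

lemma ww_pow_congr {a b : ℕ} (h : a % n = b % n) : ww n ^ a = ww n ^ b := by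
  conv_lhs => rw [← Nat.div_add_mod a n]
  conv_rhs => rw [← Nat.div_add_mod b n]
  rw [h, pow_add, pow_add, pow_mul, pow_mul, ww_pow_n, one_pow, one_pow]

noncomputable def phi (n : ℕ) [NeZero n] (r : ℕ) (x : ZMod n) : ℂ := ww n ^ (r * x.val)

lemma phi_ne_zero (r : ℕ) (x : ZMod n) : phi n r x ≠ 0 := pow_ne_zero _ (ww_ne_zero n)

lemma phi_add (r : ℕ) (x y : ZMod n) : phi n r (x + y) = phi n r x * phi n r y := by
  unfold phi
  rw [← pow_add]
  apply ww_pow_congr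
  have h : ((x + y).val) ≡ (x.val + y.val) [MOD n] := by
    rw [Nat.ModEq, ZMod.val_add]
    exact Nat.mod_mod_of_dvd _ dvd_rfl
  have h2 := h.mul_left r
  rw [mul_add] at h2
  exact h2

/-! ### The eigenvalues of the complement of the cycle -/

noncomputable def mu (n : ℕ) [NeZero n] (r : ℕ) : ℂ :=
  ∑ z ∈ ((Finset.univ : Finset (ZMod n)) \ {0, 1, -1}), phi n r z

lemma sum_univ_phi {r : ℕ} (hr : ¬ n ∣ r) : ∑ z : ZMod n, phi n r z = 0 := by
  have hpow : ∀ z : ZMod n, phi n r z = (ww n ^ r) ^ z.val := fun z => by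
    rw [phi, pow_mul]
  simp_rw [hpow]
  have : ∑ z : ZMod n, (ww n ^ r) ^ z.val = ∑ j ∈ Finset.range n, (ww n ^ r) ^ j := by
    refine Finset.sum_nbij' (fun z => z.val) (fun j => (j : ZMod n)) ?_ ?_ ?_ ?_ ?_
    · intro z _; exact Finset.mem_range.mpr (ZMod.val_lt z)
    · intro j _; exact Finset.mem_univ _
    · intro z _; exact ZMod.natCast_rightInverse z
    · intro j hj; exact ZMod.val_cast_of_lt (Finset.mem_range.mp hj)
    · intro z _; rfl
  rw [this]
  have hne : ww n ^ r - 1 ≠ 0 := by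
    rw [sub_ne_zero]
    intro h
    exact hr (((ww_prim (NeZero.ne n)).pow_eq_one_iff_dvd r).mp h)
  have hgs := geom_sum_mul (ww n ^ r) n
  rw [← pow_mul, mul_comm r n, pow_mul, ww_pow_n, one_pow, sub_self] at hgs
  exact (mul_eq_zero.mp hgs).resolve_right hne

lemma mu_eq {r : ℕ} (hn3 : 3 ≤ n) (hr : ¬ n ∣ r) :
    mu n r = -1 - ww n ^ r - (ww n ^ r)⁻¹ := by
  have h1n : Fact (1 < n) := ⟨by omega⟩
  have hd01 : (0 : ZMod n) ≠ 1 := by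
    intro h; have := congrArg ZMod.val h; rw [ZMod.val_zero, ZMod.val_one] at this; omega
  have hval_neg_one : (-1 : ZMod n).val = n - 1 := by
    obtain ⟨m, rfl⟩ : ∃ m, n = m + 1 := ⟨n - 1, by omega⟩
    simpa using ZMod.val_neg_one m
  have hd0m : (0 : ZMod n) ≠ -1 := by
    intro h; have := congrArg ZMod.val h; rw [ZMod.val_zero, hval_neg_one] at this; omega
  have hd1m : (1 : ZMod n) ≠ -1 := by
    intro h; have := congrArg ZMod.val h; rw [ZMod.val_one, hval_neg_one] at this; omega
  have hsub : ({0, 1, -1} : Finset (ZMod n)) ⊆ Finset.univ := Finset.subset_univ _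
  have hsplit : mu n r = (∑ z : ZMod n, phi n r z)
      - ∑ z ∈ ({0, 1, -1} : Finset (ZMod n)), phi n r z := by
    rw [mu, Finset.sum_sdiff_eq_sub hsub]
  have hset : ∑ z ∈ ({0, 1, -1} : Finset (ZMod n)), phi n r z
      = phi n r 0 + phi n r 1 + phi n r (-1) := by
    rw [Finset.sum_insert (by simp [hd01, hd0m]), Finset.sum_insert (by simp [hd1m]),
      Finset.sum_singleton, add_assoc]
  have h0 : phi n r 0 = 1 := by simp [phi]
  have h1 : phi n r 1 = ww n ^ r := by rw [phi, ZMod.val_one, mul_one]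
  have hm : phi n r (-1) = (ww n ^ r)⁻¹ := by
    rw [phi, hval_neg_one]
    refine eq_inv_of_mul_eq_one_left ?_
    rw [← pow_add]
    have he : r * (n - 1) + r = n * r := by
      obtain ⟨m, rfl⟩ : ∃ m, n = m + 1 := ⟨n - 1, by omega⟩
      simp [Nat.add_sub_cancel]; ring
    rw [he, pow_mul, ww_pow_n, one_pow]
  rw [hsplit, hset, sum_univ_phi hr, h0, h1, hm]
  ring

lemma mu_im_s15 (hn3 : 3 ≤ n) (r : ℕ) : (mu n r).im = 0 := by
  by_cases hr : n ∣ r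
  · have hone : ∀ z : ZMod n, phi n r z = 1 := by
      intro z
      obtain ⟨k, rfl⟩ := hr
      rw [phi, mul_assoc, pow_mul, ww_pow_n, one_pow]
    rw [mu, Finset.sum_congr rfl (fun z _ => hone z)]
    simp
  · rw [mu_eq hn3 hr]
    have h1 : ‖ww n ^ r‖ = 1 := by rw [norm_pow, ww_abs, one_pow]
    rw [Complex.inv_eq_conj h1, Complex.sub_im, Complex.sub_im, Complex.conj_im]
    simp

/-! ### Left eigenvectors of the transition matrix -/

section Mat
variable {G : Type*} [AddCommGroup G] [Fintype G] [DecidableEq G]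

lemma vecMul_cayAdj (S : Finset G) (v : G → ℂ) (hv : ∀ x y, v (x + y) = v x * v y) :
    v ᵥ* (cayAdj S) = (∑ z ∈ S, v z) • v := by
  funext y
  simp only [vecMul, dotProduct, cayAdj, Matrix.of_apply, Pi.smul_apply, smul_eq_mul]
  have hre : ∑ z : G, v (z + y) * (if z ∈ S then 1 else 0)
      = ∑ x : G, v x * (if x - y ∈ S then 1 else 0) := by
    refine Fintype.sum_bijective (fun z => z + y) (Equiv.addRight y).bijective _ _ fun z => ?_
    rw [add_sub_cancel_right]
  rw [← hre]
  simp_rw [hv]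
  rw [Finset.sum_mul, ← Finset.univ_inter S, ← Finset.sum_ite_mem]
  apply Finset.sum_congr rfl
  intro z _
  by_cases h : z ∈ S <;> simp [h]

lemma vecMul_smul_mat (c : ℂ) (M : Matrix G G ℂ) (v : G → ℂ) :
    v ᵥ* (c • M) = c • (v ᵥ* M) := by
  funext y
  simp [vecMul, dotProduct, Finset.mul_sum, mul_left_comm]

lemma vecMul_pow (M : Matrix G G ℂ) (v : G → ℂ) (μ : ℂ) (hv : v ᵥ* M = μ • v) (k : ℕ) :
    v ᵥ* (M ^ k) = (μ ^ k) • v := by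
  induction k with
  | zero => simp [Matrix.vecMul_one]
  | succ k ih =>
      rw [pow_succ, ← Matrix.vecMul_vecMul, ih]
      rw [Matrix.smul_vecMul, hv, smul_smul, pow_succ]

lemma vecMul_exp (M : Matrix G G ℂ) (v : G → ℂ) (μ : ℂ) (hv : v ᵥ* M = μ • v) :
    v ᵥ* (NormedSpace.exp M) = Complex.exp μ • v := by
  letI : SeminormedRing (Matrix G G ℂ) := Matrix.linftyOpSemiNormedRing
  letI : NormedRing (Matrix G G ℂ) := Matrix.linftyOpNormedRing
  letI : NormedAlgebra ℂ (Matrix G G ℂ) := Matrix.linftyOpNormedAlgebra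
  have hsum := NormedSpace.expSeries_summable' (𝕂 := ℂ) M
  let L : Matrix G G ℂ →ₗ[ℂ] (G → ℂ) :=
    { toFun := fun N => v ᵥ* N
      map_add' := fun A B => Matrix.vecMul_add A B v
      map_smul' := fun c N => vecMul_smul_mat c N v }
  have hL : Continuous L := LinearMap.continuous_of_finiteDimensional L
  let L' : Matrix G G ℂ →L[ℂ] (G → ℂ) := ⟨L, hL⟩
  have h1 : v ᵥ* (NormedSpace.exp M) = L' (NormedSpace.exp M) := rfl
  rw [h1, NormedSpace.exp_eq_tsum (𝕂 := ℂ), L'.map_tsum hsum]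
  have h2 : ∀ k : ℕ, L' ((k.factorial⁻¹ : ℂ) • M ^ k) = ((k.factorial⁻¹ : ℂ) • μ ^ k) • v := by
    intro k
    show v ᵥ* ((k.factorial⁻¹ : ℂ) • M ^ k) = _
    rw [vecMul_smul_mat, vecMul_pow M v μ hv k, smul_smul, smul_eq_mul]
  simp_rw [h2]
  rw [(NormedSpace.expSeries_summable' (𝕂 := ℂ) μ).tsum_smul_const]
  congr 1
  rw [Complex.exp_eq_exp_ℂ, NormedSpace.exp_eq_tsum (𝕂 := ℂ)]

end Mat

end PGFRaux

open PGFRaux Complex Finset in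
theorem stmt_15 (p s h n : ℕ) [NeZero n] (hp : p.Prime) (hpodd : Odd p)
    (hh : 3 ≤ h) (hs : 1 ≤ s) (hn : n = 2 ^ h * p ^ s) :
    ∀ a b : ZMod n, a ≠ b →
      ¬ ExhibitsPGFR ((Finset.univ : Finset (ZMod n)) \ {0, 1, -1}) a b := by
  intro a b hab hPGFR
  obtain ⟨α, β, t, hβ, hnorm, htend⟩ := hPGFR
  set S : Finset (ZMod n) := (Finset.univ : Finset (ZMod n)) \ {0, 1, -1} with hS
  -- numerology
  have hp2 : p ≠ 2 := by rintro rfl; have := Nat.odd_iff.mp hpodd; omega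
  have hp3 : 3 ≤ p := by have := hp.two_le; omega
  have h2h : (2 : ℕ) ^ 3 * 2 ^ (h - 3) = 2 ^ h := by rw [← pow_add]; congr 1; omega
  have hps : p ^ 1 * p ^ (s - 1) = p ^ s := by rw [← pow_add]; congr 1; omega
  have h2h1 : (2 : ℕ) ^ 1 * 2 ^ (h - 1) = 2 ^ h := by rw [← pow_add]; congr 1; omega
  obtain ⟨c, hc8, hc3⟩ : ∃ c : ℕ, n = 8 * c ∧ 3 ≤ c := by
    refine ⟨2 ^ (h - 3) * p ^ s, ?_, ?_⟩
    · rw [hn, ← h2h]; ring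
    · calc 3 ≤ p := hp3
        _ ≤ p ^ s := Nat.le_self_pow (by omega) p
        _ ≤ 2 ^ (h - 3) * p ^ s := Nat.le_mul_of_pos_left _ (Nat.pow_pos (by norm_num))
  obtain ⟨e, hpe, he2, hee⟩ : ∃ e : ℕ, n = p * e ∧ (∃ e', e = 2 * e') ∧ 2 ≤ e := by
    refine ⟨2 ^ h * p ^ (s - 1), ?_, ⟨2 ^ (h - 1) * p ^ (s - 1), ?_⟩, ?_⟩
    · rw [hn, ← hps]; ring
    · rw [← h2h1]; ring
    · calc 2 ≤ 2 ^ h := by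
            calc 2 = 2 ^ 1 := rfl
            _ ≤ 2 ^ h := Nat.pow_le_pow_right (by norm_num) (by omega)
        _ ≤ 2 ^ h * p ^ (s - 1) := Nat.le_mul_of_pos_right _ (Nat.pow_pos hp.pos)
  have hn0 : n ≠ 0 := NeZero.ne n
  have hn3 : 3 ≤ n := by omega
  have hndvd : ∀ m : ℕ, 0 < m → m < n → ¬ n ∣ m := by
    intro m hm1 hm2 hdvd
    exact absurd (Nat.le_of_dvd hm1 hdvd) (by omega)
  -- the character value at the difference of the two vertices
  set d : ZMod n := b - a with hd_def
  have hd : d ≠ 0 := sub_ne_zero.mpr (Ne.symm hab)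
  set ζ : ℂ := ww n ^ d.val with hζ_def
  have hζ0 : ζ ≠ 0 := pow_ne_zero _ (ww_ne_zero n)
  have hζn1 : ζ ≠ 1 := by
    intro hone
    have hdvd := ((ww_prim hn0).pow_eq_one_iff_dvd d.val).mp hone
    have hlt := ZMod.val_lt d
    have hne : d.val ≠ 0 := fun h0 => hd ((ZMod.val_eq_zero d).mp h0)
    exact hndvd d.val (by omega) hlt hdvd
  have hζabs : ‖ζ‖ = 1 := by rw [hζ_def, norm_pow, ww_abs, one_pow]
  -- key convergence of eigenvalue phases
  have key : ∀ r : ℕ, Tendsto (fun k => Complex.exp (-(Complex.I * (t k : ℂ)) * mu n r)) atTop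
      (nhds (α + β * ζ ^ r)) := by
    intro r
    have hφcont : Continuous (fun w : ZMod n → ℂ => phi n r ⬝ᵥ w) := by
      unfold dotProduct
      exact continuous_finset_sum _ fun i _ => continuous_const.mul (continuous_apply i)
    have h1 := (hφcont.tendsto _).comp htend
    simp only [Function.comp_def] at h1
    have hseq : ∀ k, phi n r ⬝ᵥ ((cayH S (t k)).mulVec (Pi.single a 1))
        = Complex.exp (-(Complex.I * (t k : ℂ)) * mu n r) * phi n r a := by
      intro k
      rw [Matrix.dotProduct_mulVec]
      have heig : phi n r ᵥ* ((-(Complex.I * ((t k : ℝ) : ℂ))) • cayAdj S)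
          = (-(Complex.I * (t k : ℂ)) * mu n r) • phi n r := by
        rw [vecMul_smul_mat, vecMul_cayAdj S (phi n r) (phi_add r), smul_smul]
        rfl
      have hH : phi n r ᵥ* (cayH S (t k))
          = Complex.exp (-(Complex.I * (t k : ℂ)) * mu n r) • phi n r := by
        rw [cayH]
        exact vecMul_exp _ _ _ heig
      rw [hH, smul_dotProduct, dotProduct_single, smul_eq_mul, mul_one]
    have hA : phi n r a ≠ 0 := phi_ne_zero r a
    have h2 := h1.mul_const ((phi n r a)⁻¹)
    have hb : phi n r b = phi n r a * ζ ^ r := by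
      have hba : b = a + d := by rw [hd_def]; ring
      rw [hba, phi_add]
      congr 1
      rw [phi, hζ_def, mul_comm r, pow_mul]
    have hfun : (fun k => (phi n r ⬝ᵥ ((cayH S (t k)).mulVec (Pi.single a 1))) * (phi n r a)⁻¹)
        = fun k => Complex.exp (-(Complex.I * (t k : ℂ)) * mu n r) := by
      funext k
      rw [hseq k]
      field_simp
    have hval : (phi n r ⬝ᵥ (α • (Pi.single a 1 : ZMod n → ℂ) + β • (Pi.single b 1 : ZMod n → ℂ)))
        * (phi n r a)⁻¹ = α + β * ζ ^ r := by
      rw [dotProduct_add, dotProduct_smul, dotProduct_smul, dotProduct_single, dotProduct_single,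
        mul_one, mul_one, smul_eq_mul, smul_eq_mul, hb]
      field_simp
    rw [← hfun, ← hval]
    exact h2
  -- the limits all have modulus one
  have habs : ∀ r : ℕ, ‖α + β * ζ ^ r‖ = 1 := by
    intro r
    have hone : ∀ k, ‖Complex.exp (-(Complex.I * (t k : ℂ)) * mu n r)‖ = 1 := by
      intro k
      rw [Complex.norm_exp]
      have him := mu_im_s15 hn3 r
      have hre0 : (-(Complex.I * (t k : ℂ)) * mu n r).re = 0 := by
        simp [Complex.mul_re, Complex.mul_im, him]
      rw [hre0, Real.exp_zero]
    have h3 := (continuous_norm.tendsto _).comp (key r)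
    simp only [Function.comp_def] at h3
    have h4 : Tendsto (fun _ : ℕ => (1 : ℝ)) atTop (nhds ‖α + β * ζ ^ r‖) :=
      h3.congr fun k => hone k
    exact tendsto_nhds_unique h4 tendsto_const_nhds
  -- eigenvalue relations
  have hx : ww n ^ (4 * c) = -1 := by
    have hsq : (ww n ^ (4 * c)) ^ 2 = 1 := by
      rw [← pow_mul, show 4 * c * 2 = n by omega, ww_pow_n]
    have hne : ww n ^ (4 * c) ≠ 1 := by
      intro hone
      exact hndvd (4 * c) (by omega) (by omega) (((ww_prim hn0).pow_eq_one_iff_dvd _).mp hone)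
    have hfac : (ww n ^ (4 * c) - 1) * (ww n ^ (4 * c) + 1) = 0 := by linear_combination hsq
    rcases mul_eq_zero.mp hfac with hcase | hcase
    · exact absurd (sub_eq_zero.mp hcase) hne
    · exact eq_neg_of_add_eq_zero_left hcase
  have hy : (ww n ^ (2 * c))⁻¹ = -(ww n ^ (2 * c)) := by
    have hsq : (ww n ^ (2 * c)) ^ 2 = -1 := by
      rw [← pow_mul, show 2 * c * 2 = 4 * c by ring, hx]
    refine inv_eq_of_mul_eq_one_right ?_
    linear_combination -hsq
  have hmu2c : mu n (2 * c) = -1 := by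
    rw [mu_eq hn3 (hndvd (2 * c) (by omega) (by omega)), hy]
    ring
  have hrel1 : mu n 1 + mu n (1 + 4 * c) = 2 * mu n (2 * c) := by
    have h14 : ww n ^ (1 + 4 * c) = -(ww n) := by
      rw [pow_add, pow_one, hx, mul_neg, mul_one]
    rw [mu_eq hn3 (hndvd 1 (by omega) (by omega)),
      mu_eq hn3 (hndvd (1 + 4 * c) (by omega) (by omega)), hmu2c, pow_one, h14, inv_neg]
    ring
  have hjlt : ∀ j, j < p → 1 + j * e < n := by
    intro j hj
    have h1 : j * e + e ≤ p * e := by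
      calc j * e + e = (j + 1) * e := by ring
        _ ≤ p * e := Nat.mul_le_mul_right e (by omega)
    have h2 : n = p * e := hpe
    linarith
  have hprim_e : IsPrimitiveRoot (ww n ^ e) p :=
    (ww_prim hn0).pow (Nat.pos_of_ne_zero hn0) (by rw [hpe]; ring)
  have hprim_e' : IsPrimitiveRoot ((ww n)⁻¹ ^ e) p :=
    ((ww_prim hn0).inv).pow (Nat.pos_of_ne_zero hn0) (by rw [hpe]; ring)
  have hgeom : ∑ j ∈ Finset.range p, (ww n ^ e) ^ j = 0 :=
    hprim_e.geom_sum_eq_zero hp.one_lt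
  have hgeom' : ∑ j ∈ Finset.range p, ((ww n)⁻¹ ^ e) ^ j = 0 :=
    hprim_e'.geom_sum_eq_zero hp.one_lt
  have hrel2 : ∑ j ∈ Finset.range p, mu n (1 + j * e) = (p : ℂ) * mu n (2 * c) := by
    have hterm : ∀ j ∈ Finset.range p, mu n (1 + j * e)
        = -1 - ww n * (ww n ^ e) ^ j - (ww n)⁻¹ * ((ww n)⁻¹ ^ e) ^ j := by
      intro j hj
      rw [mu_eq hn3 (hndvd (1 + j * e) (by omega) (hjlt j (Finset.mem_range.mp hj)))]
      congr 1
      · congr 1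
        rw [pow_add, pow_one, mul_comm j e, pow_mul]
      · rw [← inv_pow, pow_add, pow_one, mul_comm j e, pow_mul]
    rw [Finset.sum_congr rfl hterm]
    simp only [Finset.sum_sub_distrib, Finset.sum_const, ← Finset.mul_sum, hgeom, hgeom',
      Finset.card_range, mul_zero, sub_zero, nsmul_eq_mul, mul_neg, mul_one, hmu2c]
  -- limit relations
  have hG2 : (α + β * ζ ^ 1) * (α + β * ζ ^ (1 + 4 * c)) = (α + β * ζ ^ (2 * c)) ^ 2 := by
    have hfun1 : ∀ k, Complex.exp (-(Complex.I * (t k : ℂ)) * mu n 1)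
          * Complex.exp (-(Complex.I * (t k : ℂ)) * mu n (1 + 4 * c))
        = (Complex.exp (-(Complex.I * (t k : ℂ)) * mu n (2 * c))) ^ 2 := by
      intro k
      rw [← Complex.exp_add, sq, ← Complex.exp_add]
      congr 1
      linear_combination (-(Complex.I * (t k : ℂ))) * hrel1
    exact tendsto_nhds_unique (((key 1).mul (key (1 + 4 * c))).congr hfun1) ((key (2 * c)).pow 2)
  have hGp : (∏ j ∈ Finset.range p, (α + β * ζ ^ (1 + j * e)))
      = (α + β * ζ ^ (2 * c)) ^ p := by
    have hfunp : ∀ k, ∏ j ∈ Finset.range p, Complex.exp (-(Complex.I * (t k : ℂ)) * mu n (1 + j * e))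
        = (Complex.exp (-(Complex.I * (t k : ℂ)) * mu n (2 * c))) ^ p := by
      intro k
      rw [← Complex.exp_sum, ← Complex.exp_nat_mul]
      congr 1
      rw [← Finset.mul_sum, hrel2]
      ring
    exact tendsto_nhds_unique
      ((tendsto_finset_prod (Finset.range p) fun j _ => key (1 + j * e)).congr hfunp)
      ((key (2 * c)).pow p)
  -- the character value at the difference must be -1
  have hζ : ζ = -1 := by
    have hz2 : ζ ^ 2 = 1 := by
      by_cases hα : α = 0
      · rw [hα, zero_add, zero_add, zero_add] at hG2
        have h' : β ^ 2 * (ζ ^ 2 * ζ ^ (4 * c)) = β ^ 2 * (1 * ζ ^ (4 * c)) := by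
          have expand : ζ ^ 1 * ζ ^ (1 + 4 * c) = ζ ^ 2 * ζ ^ (4 * c) := by
            rw [← pow_add, ← pow_add]; congr 1; omega
          have expand2 : ζ ^ (2 * c) * ζ ^ (2 * c) = 1 * ζ ^ (4 * c) := by
            rw [one_mul, ← pow_add]; congr 1; omega
          calc β ^ 2 * (ζ ^ 2 * ζ ^ (4 * c)) = β * ζ ^ 1 * (β * ζ ^ (1 + 4 * c)) := by
                rw [← expand]; ring
            _ = (β * ζ ^ (2 * c)) ^ 2 := hG2
            _ = β ^ 2 * (1 * ζ ^ (4 * c)) := by rw [← expand2]; ring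
        have h'' := mul_left_cancel₀ (pow_ne_zero 2 hβ) h'
        exact mul_right_cancel₀ (pow_ne_zero _ hζ0) h''
      · -- modulus conditions force ζ to be real
        have hre : ∀ r : ℕ, (α * (starRingEnd ℂ) β * (starRingEnd ℂ) (ζ ^ r)).re = 0 := by
          intro r
          have h1 : Complex.normSq (α + β * ζ ^ r) = 1 := by
            rw [← Complex.sq_norm, habs r, one_pow]
          rw [Complex.normSq_add] at h1
          have h2 : Complex.normSq (β * ζ ^ r) = Complex.normSq β := by
            rw [Complex.normSq_mul]
            have : Complex.normSq (ζ ^ r) = 1 := by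
              rw [← Complex.sq_norm, norm_pow, hζabs, one_pow, one_pow]
            rw [this, mul_one]
          have h3 : Complex.normSq α + Complex.normSq β = 1 := by
            rw [← Complex.sq_norm, ← Complex.sq_norm]; exact hnorm
          rw [h2] at h1
          have h4 : (α * ((starRingEnd ℂ) (β * ζ ^ r))).re = 0 := by linarith
          rw [_root_.map_mul, ← mul_assoc] at h4
          exact h4
        set u : ℂ := α * (starRingEnd ℂ) β with hu_def
        have hu0 : u.re = 0 := by
          have := hre 0
          simpa using this
        have hune : u ≠ 0 := mul_ne_zero hα (star_ne_zero.mpr hβ)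
        have huim : u.im ≠ 0 := by
          intro h0
          exact hune (Complex.ext hu0 h0)
        have him : ζ.im = 0 := by
          have h5 := hre 1
          rw [pow_one] at h5
          have h6 : (u * (starRingEnd ℂ) ζ).re = u.re * ζ.re + u.im * ζ.im := by
            simp [Complex.mul_re, Complex.conj_re, Complex.conj_im]
          rw [h6, hu0, zero_mul, zero_add] at h5
          exact (mul_eq_zero.mp h5).resolve_left huim
        have hnsq : ζ.re * ζ.re + ζ.im * ζ.im = 1 := by
          have : Complex.normSq ζ = 1 := by rw [← Complex.sq_norm, hζabs, one_pow]
          rwa [Complex.normSq_apply] at this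
        rw [him, mul_zero, add_zero] at hnsq
        have hzre : ζ = ((ζ.re : ℝ) : ℂ) := Complex.ext rfl (by simpa using him)
        rw [hzre]
        calc ((ζ.re : ℝ) : ℂ) ^ 2 = (((ζ.re * ζ.re : ℝ)) : ℂ) := by push_cast; ring
          _ = 1 := by rw [hnsq]; norm_num
    have hfac : (ζ - 1) * (ζ + 1) = 0 := by linear_combination hz2
    rcases mul_eq_zero.mp hfac with hcase | hcase
    · exact absurd (sub_eq_zero.mp hcase) hζn1
    · exact eq_neg_of_add_eq_zero_left hcase
  -- final contradiction
  obtain ⟨e', he'⟩ := he2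
  have hev1 : ζ ^ (1 : ℕ) = -1 := by rw [pow_one, hζ]
  have hev14 : ζ ^ (1 + 4 * c) = -1 := by
    rw [hζ]; exact Odd.neg_one_pow ⟨2 * c, by ring⟩
  have hev2c : ζ ^ (2 * c) = 1 := by
    rw [hζ]; exact Even.neg_one_pow ⟨c, by ring⟩
  have hevje : ∀ j : ℕ, ζ ^ (1 + j * e) = -1 := by
    intro j
    rw [hζ]
    exact Odd.neg_one_pow ⟨j * e', by rw [he']; ring⟩
  rw [hev1, hev14, hev2c] at hG2
  have hGp' : (α - β) ^ p = (α + β) ^ p := by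
    have : ∀ j ∈ Finset.range p, (α + β * ζ ^ (1 + j * e)) = α - β := by
      intro j _
      rw [hevje j]; ring
    rw [Finset.prod_congr rfl this, Finset.prod_const, Finset.card_range, hev2c] at hGp
    rw [hGp]
    ring_nf
  have hG2' : (α - β) ^ 2 = (α + β) ^ 2 := by
    linear_combination hG2
  have hab0 : α + β ≠ 0 := by
    intro h0
    have := habs (2 * c)
    rw [hev2c, mul_one, h0] at this
    simp at this
  obtain ⟨m, hm⟩ := hpodd
  have hfin : (α + β) ^ (2 * m) * (α - β) = (α + β) ^ (2 * m) * (α + β) := by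
    calc (α + β) ^ (2 * m) * (α - β) = ((α + β) ^ 2) ^ m * (α - β) := by rw [pow_mul]
      _ = ((α - β) ^ 2) ^ m * (α - β) := by rw [hG2']
      _ = (α - β) ^ (2 * m) * (α - β) := by rw [pow_mul]
      _ = (α - β) ^ (2 * m + 1) := by rw [pow_succ]
      _ = (α - β) ^ p := by rw [hm]
      _ = (α + β) ^ p := hGp'
      _ = (α + β) ^ (2 * m + 1) := by rw [hm]
      _ = (α + β) ^ (2 * m) * (α + β) := by rw [pow_succ]
  have hcancel := mul_left_cancel₀ (pow_ne_zero (2 * m) hab0) hfin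
  apply hβ
  linear_combination (-(1 : ℂ) / 2) * hcancel
end
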